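/- arXiv:1604.02087 — 3 statements merged into one kernel-verified Lean document; each statement's English description precedes it below -/
import Mathlib

section
/- Let N be a large positive integer, α₂ ∈ [1/2,1] fixed, and δ ∈ (0,1). Then the number of quadruples (x₁,x₂,x₃,x₄) of integers with N/4 ≤ xᵢ ≤ N for all i and |(x₁² - x₃²) + α₂(x₂² - x₄²)| < δ is at most C(ε) · N^(2+ε) for every ε > 0, where C(ε) is independent of N, δ and α₂. -/
lemma key_ineq (ε : ℝ) (hε : 0 < ε) (e : ℕ) :
    (e : ℝ) + 1 ≤ (1 + 1 / (ε * Real.log 2)) * (2:ℝ) ^ ((e:ℝ) * ε) := by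
  have hlog : 0 < Real.log 2 := Real.log_pos (by norm_num)
  have hc : 0 < ε * Real.log 2 := by positivity
  have h2 : (2:ℝ) ^ ((e:ℝ) * ε) = Real.exp (Real.log 2 * ((e:ℝ) * ε)) :=
    Real.rpow_def_of_pos (by norm_num) _
  set E := (2:ℝ) ^ ((e:ℝ) * ε) with hE
  have hE1 : 1 ≤ E := Real.one_le_rpow (by norm_num) (by positivity)
  have hE2 : (e:ℝ) * (ε * Real.log 2) ≤ E := by
    rw [h2]
    calc (e:ℝ) * (ε * Real.log 2) ≤ Real.log 2 * ((e:ℝ) * ε) + 1 := by ring_nf; linarith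
      _ ≤ Real.exp (Real.log 2 * ((e:ℝ) * ε)) := Real.add_one_le_exp _
  have hdiv : (e:ℝ) ≤ E / (ε * Real.log 2) := (le_div_iff₀ hc).mpr hE2
  have hring : (1 + 1 / (ε * Real.log 2)) * E = E + E / (ε * Real.log 2) := by
    field_simp
  linarith

lemma div_bound (ε : ℝ) (hε : 0 < ε) :
    ∃ C : ℝ, 1 ≤ C ∧ ∀ n : ℕ, n ≠ 0 → (n.divisors.card : ℝ) ≤ C * (n : ℝ) ^ ε := by
  have hlog : 0 < Real.log 2 := Real.log_pos (by norm_num)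
  set B : ℝ := 1 + 1 / (ε * Real.log 2) with hBdef
  have hB : 1 ≤ B := le_add_of_nonneg_right (by positivity)
  set P : ℕ := ⌈(2:ℝ) ^ (1/ε)⌉₊ with hPdef
  refine ⟨B ^ (P + 1), one_le_pow₀ hB, ?_⟩
  intro n hn
  set S := n.primeFactors with hS
  have hcard : (n.divisors.card : ℝ) = ∏ p ∈ S, ((n.factorization p : ℝ) + 1) := by
    rw [Nat.card_divisors hn]
    push_cast
    rfl
  -- pointwise bound
  have hpoint : ∀ p ∈ S, (n.factorization p : ℝ) + 1
      ≤ (if (p:ℝ) ^ ε < 2 then B else 1) * ((p : ℝ) ^ (n.factorization p : ℕ)) ^ ε := by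
    intro p hp
    have hp2 : 2 ≤ p := (Nat.prime_of_mem_primeFactors hp).two_le
    have hp2R : (2:ℝ) ≤ (p:ℝ) := by exact_mod_cast hp2
    set e := n.factorization p with he
    have hppos : (0:ℝ) < (p:ℝ) := by positivity
    have hbase : ((2:ℝ) ^ e) ^ ε ≤ ((p:ℝ) ^ e) ^ ε :=
      Real.rpow_le_rpow (by positivity) (pow_le_pow_left₀ (by norm_num) hp2R e) hε.le
    have h2e : ((2:ℝ) ^ e) ^ ε = (2:ℝ) ^ ((e:ℝ) * ε) := by
      rw [← Real.rpow_natCast 2 e, ← Real.rpow_mul (by norm_num)]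
    split_ifs with hsmall
    · calc (e:ℝ) + 1 ≤ B * (2:ℝ) ^ ((e:ℝ) * ε) := key_ineq ε hε e
        _ ≤ B * ((p:ℝ) ^ e) ^ ε := by
            rw [← h2e] at *
            exact mul_le_mul_of_nonneg_left hbase (by linarith)
    · push_neg at hsmall
      have h1 : (e:ℝ) + 1 ≤ (2:ℝ) ^ e := by
        exact_mod_cast Nat.lt_two_pow_self (n := e)
      calc (e:ℝ) + 1 ≤ (2:ℝ) ^ e := h1
        _ ≤ ((p:ℝ) ^ ε) ^ e := pow_le_pow_left₀ (by norm_num) hsmall e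
        _ = ((p:ℝ) ^ e) ^ ε := by
            rw [← Real.rpow_natCast ((p:ℝ)^ε) e, ← Real.rpow_mul hppos.le,
              mul_comm, Real.rpow_mul hppos.le, Real.rpow_natCast]
        _ = 1 * ((p:ℝ) ^ e) ^ ε := (one_mul _).symm
  have hprodle : ∏ p ∈ S, ((n.factorization p : ℝ) + 1)
      ≤ ∏ p ∈ S, ((if (p:ℝ) ^ ε < 2 then B else 1) * ((p : ℝ) ^ (n.factorization p : ℕ)) ^ ε) :=
    Finset.prod_le_prod (fun p _ => by positivity) hpoint
  rw [Finset.prod_mul_distrib] at hprodle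
  -- product of the rpow parts equals n ^ ε
  have hprodn : ∏ p ∈ S, ((p : ℝ) ^ (n.factorization p : ℕ)) ^ ε = (n:ℝ) ^ ε := by
    rw [Real.finset_prod_rpow S _ (fun p _ => by positivity) ε]
    congr 1
    have := Nat.factorization_prod_pow_eq_self hn
    calc ∏ p ∈ S, (p : ℝ) ^ (n.factorization p : ℕ)
        = ((∏ p ∈ S, p ^ n.factorization p : ℕ) : ℝ) := by push_cast; rfl
      _ = (n : ℝ) := by rw [show ∏ p ∈ S, p ^ n.factorization p = n from this]
  -- product of the if parts is at most B ^ (P+1)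
  have hif : ∏ p ∈ S, (if (p:ℝ) ^ ε < 2 then B else 1) ≤ B ^ (P + 1) := by
    classical
    have hsplit := Finset.prod_filter_mul_prod_filter_not S (fun p : ℕ => (p:ℝ) ^ ε < 2)
      (fun p => if (p:ℝ) ^ ε < 2 then B else 1)
    have h1 : ∏ p ∈ S.filter (fun p : ℕ => (p:ℝ) ^ ε < 2), (if (p:ℝ) ^ ε < 2 then B else 1)
        = B ^ (S.filter (fun p : ℕ => (p:ℝ) ^ ε < 2)).card := by
      rw [Finset.prod_congr rfl (fun p hp => if_pos (Finset.mem_filter.mp hp).2),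
        Finset.prod_const]
    have h2 : ∏ p ∈ S.filter (fun p : ℕ => ¬ (p:ℝ) ^ ε < 2), (if (p:ℝ) ^ ε < 2 then B else 1)
        = 1 := by
      rw [Finset.prod_congr rfl (fun p hp => if_neg (Finset.mem_filter.mp hp).2),
        Finset.prod_const, one_pow]
    rw [h1, h2, mul_one] at hsplit
    have hsub : S.filter (fun p : ℕ => (p:ℝ) ^ ε < 2) ⊆ Finset.range (P + 1) := by
      intro p hp
      obtain ⟨hpS, hps⟩ := Finset.mem_filter.mp hp
      have hppos : (0:ℝ) ≤ (p:ℝ) := by positivity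
      have : (p:ℝ) < (2:ℝ) ^ (1/ε) := by
        have h := Real.rpow_lt_rpow (by positivity) hps (by positivity : 0 < 1/ε)
        rwa [← Real.rpow_mul hppos, mul_one_div_cancel hε.ne', Real.rpow_one] at h
      have : (p:ℝ) < (P:ℝ) + 1 := by
        have h' := Nat.le_ceil ((2:ℝ) ^ (1/ε))
        rw [← hPdef] at h'
        linarith
      have : p < P + 1 := by exact_mod_cast this
      exact Finset.mem_range.mpr this
    calc ∏ p ∈ S, (if (p:ℝ) ^ ε < 2 then B else 1)
        = B ^ (S.filter (fun p : ℕ => (p:ℝ) ^ ε < 2)).card := hsplit.symm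
      _ ≤ B ^ (Finset.range (P+1)).card :=
          pow_le_pow_right₀ hB (Finset.card_le_card hsub)
      _ = B ^ (P + 1) := by rw [Finset.card_range]
  rw [hcard]
  calc ∏ p ∈ S, ((n.factorization p : ℝ) + 1)
      ≤ (∏ p ∈ S, (if (p:ℝ) ^ ε < 2 then B else 1)) * ∏ p ∈ S, ((p : ℝ) ^ (n.factorization p : ℕ)) ^ ε := hprodle
    _ ≤ B ^ (P+1) * (n:ℝ) ^ ε := by
        rw [hprodn]
        exact mul_le_mul_of_nonneg_right hif (by positivity)

def intDivisors (m : ℤ) : Finset ℤ :=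
  (m.natAbs.divisors.image (fun d : ℕ => (d : ℤ))) ∪ (m.natAbs.divisors.image (fun d : ℕ => -(d : ℤ)))

lemma card_intDivisors (m : ℤ) : (intDivisors m).card ≤ 2 * m.natAbs.divisors.card := by
  calc (intDivisors m).card
      ≤ (m.natAbs.divisors.image (fun d : ℕ => (d : ℤ))).card
        + (m.natAbs.divisors.image (fun d : ℕ => -(d : ℤ))).card := Finset.card_union_le _ _
    _ ≤ m.natAbs.divisors.card + m.natAbs.divisors.card :=
        add_le_add (Finset.card_image_le) (Finset.card_image_le)
    _ = 2 * m.natAbs.divisors.card := by ring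

lemma mem_intDivisors {a m : ℤ} (_ha : a ≠ 0) (hm : m ≠ 0) (h : a ∣ m) : a ∈ intDivisors m := by
  have hd : a.natAbs ∈ m.natAbs.divisors :=
    Nat.mem_divisors.mpr ⟨Int.natAbs_dvd_natAbs.mpr h, Int.natAbs_ne_zero.mpr hm⟩
  rcases Int.natAbs_eq a with h1 | h1
  · exact Finset.mem_union_left _ (Finset.mem_image.mpr ⟨a.natAbs, hd, h1.symm⟩)
  · exact Finset.mem_union_right _ (Finset.mem_image.mpr ⟨a.natAbs, hd, h1.symm⟩)
open Set

set_option maxHeartbeats 4000000 in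
theorem stmt_0 :
    ∀ ε : ℝ, 0 < ε → ∃ C : ℝ, 0 < C ∧
      ∀ N : ℕ, 1 ≤ N → ∀ δ : ℝ, 0 < δ → δ < 1 →
        ∀ α₂ : ℝ, α₂ ∈ Set.Icc (1/2 : ℝ) 1 →
          (Set.ncard {x : ℤ × ℤ × ℤ × ℤ |
              ((N : ℝ)/4 ≤ (x.1 : ℝ) ∧ (x.1 : ℝ) ≤ N) ∧
              ((N : ℝ)/4 ≤ (x.2.1 : ℝ) ∧ (x.2.1 : ℝ) ≤ N) ∧
              ((N : ℝ)/4 ≤ (x.2.2.1 : ℝ) ∧ (x.2.2.1 : ℝ) ≤ N) ∧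
              ((N : ℝ)/4 ≤ (x.2.2.2 : ℝ) ∧ (x.2.2.2 : ℝ) ≤ N) ∧
              |((x.1 : ℝ)^2 - (x.2.2.1 : ℝ)^2) + α₂ * ((x.2.1 : ℝ)^2 - (x.2.2.2 : ℝ)^2)| < δ}
            : ℝ) ≤ C * (N : ℝ) ^ (2 + ε : ℝ) := by
  intro ε hε
  obtain ⟨C₀, hC₀, hdiv⟩ := div_bound (ε/4) (by positivity)
  refine ⟨1 + 24 * C₀^2 * (4:ℝ) ^ (ε/2), by positivity, ?_⟩
  intro N hN δ hδ0 hδ1 α₂ hα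
  obtain ⟨hα1, hα2⟩ := hα
  have hN1 : (1:ℝ) ≤ (N:ℝ) := by exact_mod_cast hN
  have hNpos : (0:ℝ) < (N:ℝ) := by linarith
  set A : Set (ℤ × ℤ × ℤ × ℤ) := {x : ℤ × ℤ × ℤ × ℤ |
      ((N : ℝ)/4 ≤ (x.1 : ℝ) ∧ (x.1 : ℝ) ≤ N) ∧
      ((N : ℝ)/4 ≤ (x.2.1 : ℝ) ∧ (x.2.1 : ℝ) ≤ N) ∧
      ((N : ℝ)/4 ≤ (x.2.2.1 : ℝ) ∧ (x.2.2.1 : ℝ) ≤ N) ∧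
      ((N : ℝ)/4 ≤ (x.2.2.2 : ℝ) ∧ (x.2.2.2 : ℝ) ≤ N) ∧
      |((x.1 : ℝ)^2 - (x.2.2.1 : ℝ)^2) + α₂ * ((x.2.1 : ℝ)^2 - (x.2.2.2 : ℝ)^2)| < δ} with hAdef
  -- integer bounds for members
  have hbound : ∀ x ∈ A, (1 ≤ x.1 ∧ x.1 ≤ (N:ℤ)) ∧ (1 ≤ x.2.1 ∧ x.2.1 ≤ (N:ℤ)) ∧
      (1 ≤ x.2.2.1 ∧ x.2.2.1 ≤ (N:ℤ)) ∧ (1 ≤ x.2.2.2 ∧ x.2.2.2 ≤ (N:ℤ)) := by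
    intro x hx
    obtain ⟨⟨h1, h2⟩, ⟨h3, h4⟩, ⟨h5, h6⟩, ⟨h7, h8⟩, -⟩ := hx
    have hlow : ∀ z : ℤ, (N:ℝ)/4 ≤ (z:ℝ) → 1 ≤ z := by
      intro z h
      have h0 : (0:ℝ) < (z:ℝ) := lt_of_lt_of_le (by linarith) h
      have : (0:ℤ) < z := by exact_mod_cast h0
      omega
    have hhigh : ∀ z : ℤ, (z:ℝ) ≤ (N:ℝ) → z ≤ (N:ℤ) := fun z h => by exact_mod_cast h
    exact ⟨⟨hlow _ h1, hhigh _ h2⟩, ⟨hlow _ h3, hhigh _ h4⟩,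
      ⟨hlow _ h5, hhigh _ h6⟩, ⟨hlow _ h7, hhigh _ h8⟩⟩
  set T₀ : Set (ℤ × ℤ × ℤ × ℤ) := A ∩ {x | x.1 = x.2.2.1 ∧ x.2.1 = x.2.2.2} with hT₀def
  set T₁ : Set (ℤ × ℤ × ℤ × ℤ) := A ∩ {x | ¬(x.1 = x.2.2.1 ∧ x.2.1 = x.2.2.2)} with hT₁def
  have hsplit : A = T₀ ∪ T₁ := by
    ext x
    simp only [hT₀def, hT₁def, Set.mem_union, Set.mem_inter_iff, Set.mem_setOf_eq]
    tauto
  -- key structural facts on T₁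
  have hkey : ∀ x ∈ T₁, x.1 ≠ x.2.2.1 ∧ x.2.1 ≠ x.2.2.2 ∧
      x.1^2 - x.2.2.1^2 ≠ 0 ∧ x.2.1^2 - x.2.2.2^2 ≠ 0 := by
    intro x hx
    obtain ⟨hxA, hxne⟩ := hx
    obtain ⟨⟨b1, b2⟩, ⟨b3, b4⟩, ⟨b5, b6⟩, ⟨b7, b8⟩⟩ := hbound x hxA
    have habs : |((x.1^2 - x.2.2.1^2 : ℤ) : ℝ) + α₂ * ((x.2.1^2 - x.2.2.2^2 : ℤ) : ℝ)| < δ := by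
      have := hxA.2.2.2.2
      push_cast
      convert this using 3 <;> push_cast <;> ring
    have hvlarge : x.2.1 ≠ x.2.2.2 → 2 ≤ |x.2.1^2 - x.2.2.2^2| := by
      intro hne
      rcases lt_or_gt_of_ne hne with h | h
      · rw [abs_of_nonpos (by nlinarith)]; nlinarith
      · rw [abs_of_nonneg (by nlinarith)]; nlinarith
    have ha : x.1 ≠ x.2.2.1 := by
      intro h
      have hu0 : x.1^2 - x.2.2.1^2 = 0 := by rw [h]; ring
      have hb : x.2.1 ≠ x.2.2.2 := by
        intro h2; exact hxne ⟨h, h2⟩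
      have h2 := hvlarge hb
      rw [hu0] at habs
      have habs' : |α₂ * ((x.2.1^2 - x.2.2.2^2 : ℤ) : ℝ)| < δ := by simpa using habs
      rw [abs_mul, abs_of_nonneg (by linarith)] at habs'
      have hcast : (2:ℝ) ≤ |((x.2.1^2 - x.2.2.2^2 : ℤ) : ℝ)| := by
        rw [← Int.cast_abs]; exact_mod_cast h2
      nlinarith
    have hu : x.1^2 - x.2.2.1^2 ≠ 0 := by
      intro h
      have h' : (x.1 - x.2.2.1) * (x.1 + x.2.2.1) = 0 := by linear_combination h
      rcases mul_eq_zero.mp h' with h'' | h''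
      · exact ha (by omega)
      · omega
    have hv : x.2.1^2 - x.2.2.2^2 ≠ 0 := by
      intro h
      rw [h] at habs
      simp only [Int.cast_zero, mul_zero, add_zero] at habs
      have : |(x.1^2 - x.2.2.1^2 : ℤ)| < 1 := by
        have : |((x.1^2 - x.2.2.1^2 : ℤ) : ℝ)| < 1 := lt_trans habs hδ1
        rw [← Int.cast_abs] at this
        exact_mod_cast this
      exact hu (Int.abs_lt_one_iff.mp this)
    have hb : x.2.1 ≠ x.2.2.2 := by
      intro h; exact hv (by rw [h]; ring)
    exact ⟨ha, hb, hu, hv⟩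
  -- the interval trapping for u
  have htrap : ∀ x ∈ T₁,
      ⌈-α₂ * ((x.2.1^2 - x.2.2.2^2 : ℤ) : ℝ) - δ⌉ ≤ x.1^2 - x.2.2.1^2 ∧
      x.1^2 - x.2.2.1^2 ≤ ⌈-α₂ * ((x.2.1^2 - x.2.2.2^2 : ℤ) : ℝ) - δ⌉ + 1 := by
    intro x hx
    obtain ⟨hxA, -⟩ := hx
    set L : ℝ := -α₂ * ((x.2.1^2 - x.2.2.2^2 : ℤ) : ℝ) - δ with hL
    have habs : |((x.1^2 - x.2.2.1^2 : ℤ) : ℝ) + α₂ * ((x.2.1^2 - x.2.2.2^2 : ℤ) : ℝ)| < δ := by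
      have := hxA.2.2.2.2
      push_cast
      convert this using 3 <;> push_cast <;> ring
    obtain ⟨hl, hr⟩ := abs_lt.mp habs
    constructor
    · apply Int.ceil_le.mpr
      rw [hL]
      linarith
    · have h1 : ((x.1^2 - x.2.2.1^2 : ℤ) : ℝ) < L + 2*δ := by rw [hL]; linarith
      have h2 : L ≤ (⌈L⌉ : ℝ) := Int.le_ceil L
      have : ((x.1^2 - x.2.2.1^2 : ℤ) : ℝ) < (⌈L⌉ : ℝ) + 2 := by linarith
      have : (x.1^2 - x.2.2.1^2 : ℤ) < ⌈L⌉ + 2 := by exact_mod_cast this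
      omega
  -- T₀ bound
  have hinj₀ : Set.InjOn (fun x : ℤ×ℤ×ℤ×ℤ => (x.1, x.2.1)) T₀ := by
    intro x hx y hy hxy
    obtain ⟨-, hx1, hx2⟩ := hx
    obtain ⟨-, hy1, hy2⟩ := hy
    simp only [Prod.mk.injEq] at hxy
    obtain ⟨e1, e2⟩ := hxy
    have e3 : x.2.2.1 = y.2.2.1 := by rw [← hx1, ← hy1]; exact e1
    have e4 : x.2.2.2 = y.2.2.2 := by rw [← hx2, ← hy2]; exact e2
    exact Prod.ext e1 (Prod.ext e2 (Prod.ext e3 e4))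
  have himg₀ : (fun x : ℤ×ℤ×ℤ×ℤ => (x.1, x.2.1)) '' T₀ ⊆
      ↑(Finset.Icc (1:ℤ) (N:ℤ) ×ˢ Finset.Icc (1:ℤ) (N:ℤ)) := by
    rintro - ⟨x, hx, rfl⟩
    obtain ⟨⟨c1, c2⟩, ⟨c3, c4⟩, -, -⟩ := hbound x hx.1
    simp only [Finset.coe_product, Set.mem_prod, Finset.mem_coe, Finset.mem_Icc]
    exact ⟨⟨c1, c2⟩, ⟨c3, c4⟩⟩
  have hT₀fin : T₀.Finite :=
    Set.Finite.of_finite_image (Set.Finite.subset (Finset.finite_toSet _) himg₀) hinj₀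
  have hT₀card : (T₀.ncard : ℝ) ≤ (N:ℝ)^2 := by
    have h1 : T₀.ncard = ((fun x : ℤ×ℤ×ℤ×ℤ => (x.1, x.2.1)) '' T₀).ncard :=
      (Set.ncard_image_of_injOn hinj₀).symm
    have h2 : ((fun x : ℤ×ℤ×ℤ×ℤ => (x.1, x.2.1)) '' T₀).ncard
        ≤ (Finset.Icc (1:ℤ) (N:ℤ) ×ˢ Finset.Icc (1:ℤ) (N:ℤ)).card := by
      rw [← Set.ncard_coe_finset]
      exact Set.ncard_le_ncard himg₀ (Finset.finite_toSet _)
    have h3 : (Finset.Icc (1:ℤ) (N:ℤ) ×ˢ Finset.Icc (1:ℤ) (N:ℤ)).card = N * N := by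
      rw [Finset.card_product, Int.card_Icc]
      simp
    rw [h1]
    calc (((fun x : ℤ×ℤ×ℤ×ℤ => (x.1, x.2.1)) '' T₀).ncard : ℝ)
        ≤ ((Finset.Icc (1:ℤ) (N:ℤ) ×ˢ Finset.Icc (1:ℤ) (N:ℤ)).card : ℝ) := by exact_mod_cast h2
      _ = (N:ℝ)^2 := by rw [h3]; push_cast; ring
  -- T₁ injection
  set f₁ : ℤ×ℤ×ℤ×ℤ → (ℤ×ℤ)×(ℤ×ℤ) := fun x =>
    ((x.2.1^2 - x.2.2.2^2,
      (x.1^2 - x.2.2.1^2) - ⌈-α₂ * ((x.2.1^2 - x.2.2.2^2 : ℤ) : ℝ) - δ⌉),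
     (x.1 - x.2.2.1, x.2.1 - x.2.2.2)) with hf₁
  set I : Finset (ℤ×ℤ) := (Finset.Icc (-((N:ℤ)^2)) ((N:ℤ)^2)) ×ˢ ({0, 1} : Finset ℤ) with hIdef
  set F : Finset ((ℤ×ℤ)×(ℤ×ℤ)) := I.biUnion (fun q => ({q} : Finset (ℤ×ℤ)) ×ˢ
      ((intDivisors (⌈-α₂ * ((q.1 : ℤ) : ℝ) - δ⌉ + q.2)) ×ˢ intDivisors q.1)) with hFdef
  have hinj₁ : Set.InjOn f₁ T₁ := by
    intro x hx y hy hxy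
    obtain ⟨hax, hbx, hux, hvx⟩ := hkey x hx
    obtain ⟨hay, hby, huy, hvy⟩ := hkey y hy
    simp only [hf₁, Prod.mk.injEq] at hxy
    obtain ⟨⟨e1, e2⟩, e3, e4⟩ := hxy
    rw [e1] at e2
    have euv : x.1^2 - x.2.2.1^2 = y.1^2 - y.2.2.1^2 := by omega
    have hs1 : x.1 + x.2.2.1 = y.1 + y.2.2.1 := by
      have h3 : (x.1 - x.2.2.1) * (x.1 + x.2.2.1) = (y.1 - y.2.2.1) * (y.1 + y.2.2.1) := by
        linear_combination euv
      rw [← e3] at h3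
      exact mul_left_cancel₀ (sub_ne_zero.mpr hax) h3
    have hs2 : x.2.1 + x.2.2.2 = y.2.1 + y.2.2.2 := by
      have h3 : (x.2.1 - x.2.2.2) * (x.2.1 + x.2.2.2) = (y.2.1 - y.2.2.2) * (y.2.1 + y.2.2.2) := by
        linear_combination e1
      rw [← e4] at h3
      exact mul_left_cancel₀ (sub_ne_zero.mpr hbx) h3
    exact Prod.ext (by omega) (Prod.ext (by omega) (Prod.ext (by omega) (by omega)))
  have himg₁ : f₁ '' T₁ ⊆ ↑F := by
    rintro - ⟨x, hx, rfl⟩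
    obtain ⟨hax, hbx, hux, hvx⟩ := hkey x hx
    obtain ⟨ht1, ht2⟩ := htrap x hx
    obtain ⟨⟨c1, c2⟩, ⟨c3, c4⟩, ⟨c5, c6⟩, ⟨c7, c8⟩⟩ := hbound x hx.1
    rw [Finset.mem_coe, hFdef]
    apply Finset.mem_biUnion.mpr
    refine ⟨(x.2.1^2 - x.2.2.2^2,
      (x.1^2 - x.2.2.1^2) - ⌈-α₂ * ((x.2.1^2 - x.2.2.2^2 : ℤ) : ℝ) - δ⌉), ?_, ?_⟩
    · rw [hIdef]
      simp only [Finset.mem_product, Finset.mem_Icc, Finset.mem_insert, Finset.mem_singleton]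
      refine ⟨⟨by nlinarith, by nlinarith⟩, by omega⟩
    · simp only [hf₁, Finset.mem_product, Finset.mem_singleton]
      refine ⟨trivial, ?_, ?_⟩
      · have hue : ⌈-α₂ * ((x.2.1^2 - x.2.2.2^2 : ℤ) : ℝ) - δ⌉ +
            ((x.1^2 - x.2.2.1^2) - ⌈-α₂ * ((x.2.1^2 - x.2.2.2^2 : ℤ) : ℝ) - δ⌉)
            = x.1^2 - x.2.2.1^2 := by ring
        rw [hue]
        exact mem_intDivisors (sub_ne_zero.mpr hax) hux ⟨x.1 + x.2.2.1, by ring⟩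
      · exact mem_intDivisors (sub_ne_zero.mpr hbx) hvx ⟨x.2.1 + x.2.2.2, by ring⟩
  have hT₁fin : T₁.Finite :=
    Set.Finite.of_finite_image (Set.Finite.subset (Finset.finite_toSet _) himg₁) hinj₁
  have hT₁card : (T₁.ncard : ℝ) ≤ (F.card : ℝ) := by
    have h1 : T₁.ncard = (f₁ '' T₁).ncard := (Set.ncard_image_of_injOn hinj₁).symm
    have h2 : (f₁ '' T₁).ncard ≤ F.card := by
      rw [← Set.ncard_coe_finset]
      exact Set.ncard_le_ncard himg₁ (Finset.finite_toSet _)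
    rw [h1]; exact_mod_cast h2
  -- bounding F.card
  set Db : ℝ := C₀ * ((4:ℝ) * (N:ℝ)^2) ^ (ε/4) with hDbdef
  have hDbpos : 0 < Db := by positivity
  have hDcard : ∀ m : ℤ, |m| ≤ 4*(N:ℤ)^2 → ((intDivisors m).card : ℝ) ≤ 2 * Db := by
    intro m hm
    by_cases h0 : m = 0
    · subst h0
      have h0' : intDivisors 0 = ∅ := by simp [intDivisors]
      rw [h0']
      simp only [Finset.card_empty, Nat.cast_zero]
      positivity
    · have h1 := card_intDivisors m
      have h2 := hdiv m.natAbs (Int.natAbs_ne_zero.mpr h0)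
      have h3 : ((m.natAbs : ℕ) : ℝ) ≤ 4*(N:ℝ)^2 := by
        have h4 : ((m.natAbs : ℕ) : ℤ) ≤ 4*(N:ℤ)^2 := by
          rw [Int.abs_eq_natAbs] at hm; exact_mod_cast hm
        exact_mod_cast h4
      have h4 : ((m.natAbs : ℕ) : ℝ) ^ (ε/4 : ℝ) ≤ ((4:ℝ)*(N:ℝ)^2) ^ (ε/4 : ℝ) :=
        Real.rpow_le_rpow (by positivity) h3 (by positivity)
      calc ((intDivisors m).card : ℝ) ≤ 2 * (m.natAbs.divisors.card : ℝ) := by exact_mod_cast h1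
        _ ≤ 2 * (C₀ * ((m.natAbs : ℕ) : ℝ) ^ (ε/4 : ℝ)) := by linarith
        _ ≤ 2 * Db := by rw [hDbdef]; nlinarith
  have hFcard : (F.card : ℝ) ≤ 6 * (N:ℝ)^2 * (2*Db)^2 := by
    have hstep1 : F.card ≤ ∑ q ∈ I, (({q} : Finset (ℤ×ℤ)) ×ˢ
        ((intDivisors (⌈-α₂ * ((q.1 : ℤ) : ℝ) - δ⌉ + q.2)) ×ˢ intDivisors q.1)).card :=
      Finset.card_biUnion_le
    have hstep2 : ∀ q ∈ I, ((({q} : Finset (ℤ×ℤ)) ×ˢ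
        ((intDivisors (⌈-α₂ * ((q.1 : ℤ) : ℝ) - δ⌉ + q.2)) ×ˢ intDivisors q.1)).card : ℝ)
        ≤ (2*Db)^2 := by
      intro q hq
      rw [hIdef] at hq
      simp only [Finset.mem_product, Finset.mem_Icc, Finset.mem_insert,
        Finset.mem_singleton] at hq
      obtain ⟨⟨hq1, hq2⟩, hq3⟩ := hq
      have hq1R : |(q.1 : ℝ)| ≤ (N:ℝ)^2 := by
        rw [abs_le]
        constructor <;> [exact_mod_cast hq1; exact_mod_cast hq2]
      have hm1 : |(⌈-α₂ * ((q.1 : ℤ) : ℝ) - δ⌉ + q.2 : ℤ)| ≤ 4*(N:ℤ)^2 := by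
        have hz1 : (-α₂ * ((q.1 : ℤ) : ℝ) - δ) ≤ (⌈-α₂ * ((q.1 : ℤ) : ℝ) - δ⌉ : ℝ) :=
          Int.le_ceil _
        have hz2 : ((⌈-α₂ * ((q.1 : ℤ) : ℝ) - δ⌉ : ℤ) : ℝ) < (-α₂ * ((q.1 : ℤ) : ℝ) - δ) + 1 :=
          Int.ceil_lt_add_one _
        have hza : |α₂ * ((q.1 : ℤ) : ℝ)| ≤ (N:ℝ)^2 := by
          rw [abs_mul, abs_of_nonneg (by linarith)]
          nlinarith [abs_nonneg ((q.1 : ℤ) : ℝ)]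
        have hzb := abs_le.mp hza
        have hreal : |((⌈-α₂ * ((q.1 : ℤ) : ℝ) - δ⌉ + q.2 : ℤ) : ℝ)| ≤ 4*(N:ℝ)^2 := by
          have hq3R : (0:ℝ) ≤ (q.2 : ℝ) ∧ (q.2 : ℝ) ≤ 1 := by
            rcases hq3 with h | h <;> rw [h] <;> norm_num
          have hN2 : (1:ℝ) ≤ (N:ℝ)^2 := by nlinarith
          rw [abs_le]
          push_cast
          constructor <;> nlinarith [hzb.1, hzb.2, hq3R.1, hq3R.2]
        rw [← Int.cast_abs] at hreal
        have h4N : ((4*(N:ℤ)^2 : ℤ) : ℝ) = 4*(N:ℝ)^2 := by push_cast; ring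
        rw [← h4N] at hreal
        exact_mod_cast hreal
      have hm2 : |(q.1 : ℤ)| ≤ 4*(N:ℤ)^2 := by
        have hNZ : (1:ℤ) ≤ (N:ℤ) := by exact_mod_cast hN
        have hN2 : (1:ℤ) ≤ (N:ℤ)^2 := by nlinarith
        rw [abs_le]; omega
      rw [Finset.card_product, Finset.card_product, Finset.card_singleton, one_mul]
      push_cast
      calc ((intDivisors (⌈-α₂ * ((q.1 : ℤ) : ℝ) - δ⌉ + q.2)).card : ℝ)
            * ((intDivisors q.1).card : ℝ)
          ≤ (2*Db) * (2*Db) := by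
            apply mul_le_mul (hDcard _ hm1) (hDcard _ hm2) (Nat.cast_nonneg _) (by positivity)
        _ = (2*Db)^2 := by ring
    have hstep3 : (F.card : ℝ) ≤ (I.card : ℝ) * (2*Db)^2 := by
      calc (F.card : ℝ) ≤ (∑ q ∈ I, (({q} : Finset (ℤ×ℤ)) ×ˢ
            ((intDivisors (⌈-α₂ * ((q.1 : ℤ) : ℝ) - δ⌉ + q.2)) ×ˢ intDivisors q.1)).card : ℕ) := by
            exact_mod_cast hstep1
        _ = ∑ q ∈ I, ((({q} : Finset (ℤ×ℤ)) ×ˢ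
            ((intDivisors (⌈-α₂ * ((q.1 : ℤ) : ℝ) - δ⌉ + q.2)) ×ˢ intDivisors q.1)).card : ℝ) := by
            push_cast; rfl
        _ ≤ ∑ _q ∈ I, (2*Db)^2 := Finset.sum_le_sum hstep2
        _ = (I.card : ℝ) * (2*Db)^2 := by rw [Finset.sum_const, nsmul_eq_mul]
    have hIcard : (I.card : ℝ) ≤ 6 * (N:ℝ)^2 := by
      have h1 : I.card = (Finset.Icc (-((N:ℤ)^2)) ((N:ℤ)^2)).card * 2 := by
        rw [hIdef, Finset.card_product]
        congr 1
      have h2 : (Finset.Icc (-((N:ℤ)^2)) ((N:ℤ)^2)).card = 2*N^2+1 := by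
        rw [Int.card_Icc]
        have h3 : ((N:ℤ)^2 + 1 - -((N:ℤ)^2)) = ((2*N^2+1 : ℕ) : ℤ) := by push_cast; ring
        rw [h3, Int.toNat_natCast]
      have hN2 : (1:ℝ) ≤ (N:ℝ)^2 := by nlinarith
      rw [h1, h2]
      push_cast
      nlinarith
    calc (F.card : ℝ) ≤ (I.card : ℝ) * (2*Db)^2 := hstep3
      _ ≤ 6 * (N:ℝ)^2 * (2*Db)^2 := by nlinarith [sq_nonneg (2*Db)]
  -- final computation
  have hDbsq : (2*Db)^2 = 4 * C₀^2 * ((4:ℝ)^(ε/2 : ℝ)) * ((N:ℝ) ^ (ε : ℝ)) := by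
    have h1 : (((4:ℝ) * (N:ℝ)^2) ^ (ε/4 : ℝ))^(2:ℕ) = ((4:ℝ) * (N:ℝ)^2) ^ (ε/2 : ℝ) := by
      rw [← Real.rpow_natCast (((4:ℝ) * (N:ℝ)^2) ^ (ε/4 : ℝ)) 2,
        ← Real.rpow_mul (by positivity)]
      congr 1; ring
    have h2 : ((4:ℝ) * (N:ℝ)^2) ^ (ε/2 : ℝ) = (4:ℝ)^(ε/2 : ℝ) * ((N:ℝ)^2) ^ (ε/2 : ℝ) :=
      Real.mul_rpow (by norm_num) (by positivity)
    have h3 : ((N:ℝ)^2) ^ (ε/2 : ℝ) = (N:ℝ) ^ (ε : ℝ) := by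
      rw [← Real.rpow_natCast (N:ℝ) 2, ← Real.rpow_mul hNpos.le]
      congr 1; ring
    calc (2*Db)^2 = 4 * C₀^2 * ((((4:ℝ) * (N:ℝ)^2) ^ (ε/4 : ℝ))^(2:ℕ)) := by
          rw [hDbdef]; ring
      _ = 4 * C₀^2 * ((4:ℝ)^(ε/2 : ℝ)) * ((N:ℝ) ^ (ε : ℝ)) := by rw [h1, h2, h3]; ring
  have hN2eps : (N:ℝ)^2 * (N:ℝ) ^ (ε : ℝ) = (N:ℝ) ^ (2 + ε : ℝ) := by
    rw [Real.rpow_add hNpos, ← Real.rpow_natCast (N:ℝ) 2]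
    norm_num
  have hfin : (A.ncard : ℝ) ≤ (T₀.ncard : ℝ) + (T₁.ncard : ℝ) := by
    rw [hsplit]
    exact_mod_cast Set.ncard_union_le T₀ T₁
  have hrpow2 : (N:ℝ)^2 ≤ (N:ℝ) ^ (2 + ε : ℝ) := by
    have : (N:ℝ)^2 = (N:ℝ) ^ ((2:ℕ) : ℝ) := by rw [Real.rpow_natCast]
    rw [this]
    apply Real.rpow_le_rpow_of_exponent_le hN1
    push_cast; linarith
  calc (A.ncard : ℝ) ≤ (T₀.ncard : ℝ) + (T₁.ncard : ℝ) := hfin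
    _ ≤ (N:ℝ)^2 + 6 * (N:ℝ)^2 * (2*Db)^2 := by linarith
    _ = (N:ℝ)^2 + 24 * C₀^2 * ((4:ℝ)^(ε/2 : ℝ)) * ((N:ℝ)^2 * (N:ℝ) ^ (ε : ℝ)) := by
        rw [hDbsq]; ring
    _ = (N:ℝ)^2 + 24 * C₀^2 * ((4:ℝ)^(ε/2 : ℝ)) * (N:ℝ) ^ (2 + ε : ℝ) := by rw [hN2eps]
    _ ≤ (1 + 24 * C₀^2 * (4:ℝ)^(ε/2 : ℝ)) * (N:ℝ) ^ (2 + ε : ℝ) := by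
        have h0 : (0:ℝ) ≤ 24 * C₀^2 * ((4:ℝ)^(ε/2 : ℝ)) := by positivity
        nlinarith [hrpow2]
end

section
/- Let N ≥ 2 and for real t define H_N(t) = Σ_{N < n ≤ 2N} n^{it}. Then there is an absolute constant c such that |H_N(t)| ≤ c·(N/|t| + √|t|) for all t ≠ 0. -/
section Aux
open Real Finset


lemma cot_anti {x y : ℝ} (hx : 0 < x) (hxy : x ≤ y) (hy : y < π) :
    Real.cot y ≤ Real.cot x := by
  have sx : 0 < Real.sin x := Real.sin_pos_of_pos_of_lt_pi hx (lt_of_le_of_lt hxy hy)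
  have sy : 0 < Real.sin y := Real.sin_pos_of_pos_of_lt_pi (lt_of_lt_of_le hx hxy) hy
  have hs : 0 ≤ Real.sin (y - x) :=
    Real.sin_nonneg_of_nonneg_of_le_pi (by linarith) (by linarith)
  rw [Real.cot_eq_cos_div_sin, Real.cot_eq_cos_div_sin, div_le_div_iff₀ sy sx]
  have := Real.sin_sub y x
  nlinarith [this, hs]

lemma cot_le_inv {x : ℝ} (hx : 0 < x) (hx1 : x ≤ 1) : Real.cot x ≤ 1 / x := by
  have hπ : x < π / 2 := by have := Real.pi_gt_three; linarith
  have ht : x < Real.tan x := Real.lt_tan hx hπ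
  have hc : 0 < Real.cos x := Real.cos_pos_of_mem_Ioo ⟨by linarith [Real.pi_pos], hπ⟩
  have hs : 0 < Real.sin x := Real.sin_pos_of_pos_of_lt_pi hx (by linarith [Real.pi_pos])
  rw [Real.cot_eq_cos_div_sin, div_le_div_iff₀ hs hx]
  rw [Real.tan_eq_sin_div_cos, lt_div_iff₀ hc] at ht
  nlinarith

lemma cot_pi_sub (x : ℝ) : Real.cot (π - x) = -Real.cot x := by
  rw [Real.cot_eq_cos_div_sin, Real.cot_eq_cos_div_sin, Real.cos_pi_sub, Real.sin_pi_sub,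
    neg_div]

lemma abs_cot_le {δ θ : ℝ} (hδ : 0 < δ) (hδ1 : δ ≤ 1) (h1 : δ ≤ θ) (h2 : θ ≤ 2 * π - δ) :
    |Real.cot (θ / 2)| ≤ 2 / δ := by
  have hπ := Real.pi_gt_three
  have hcd : Real.cot (δ / 2) ≤ 2 / δ := by
    have h := cot_le_inv (x := δ / 2) (by linarith) (by linarith)
    calc Real.cot (δ / 2) ≤ 1 / (δ / 2) := h
    _ = 2 / δ := by field_simp
  rw [abs_le]
  constructor
  · have h := cot_anti (x := θ / 2) (y := π - δ / 2) (by linarith) (by linarith) (by linarith)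
    rw [cot_pi_sub] at h
    linarith
  · have h := cot_anti (x := δ / 2) (y := θ / 2) (by linarith) (by linarith) (by linarith)
    linarith

lemma exp_theta_key {θ : ℝ} (h1 : 0 < θ) (h2 : θ < 2 * π) :
    (Complex.exp (θ * Complex.I) - 1) *
      (-(1 / 2 : ℂ) - (Real.cot (θ / 2) : ℂ) / 2 * Complex.I) = 1 := by
  have hs : 0 < Real.sin (θ / 2) :=
    Real.sin_pos_of_pos_of_lt_pi (by linarith) (by linarith)
  have hcos : Real.cos θ = Real.cos (θ / 2) ^ 2 - Real.sin (θ / 2) ^ 2 := by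
    rw [← Real.cos_two_mul']; ring_nf
  have hsin : Real.sin θ = 2 * Real.sin (θ / 2) * Real.cos (θ / 2) := by
    rw [← Real.sin_two_mul]; ring_nf
  have hp : (Real.sin (θ / 2) : ℂ) ^ 2 + (Real.cos (θ / 2) : ℂ) ^ 2 = 1 := by
    exact_mod_cast congrArg (Complex.ofReal) (Real.sin_sq_add_cos_sq (θ / 2))
  have hsne : (Real.sin (θ / 2) : ℂ) ≠ 0 := by
    exact_mod_cast Complex.ofReal_ne_zero.2 (ne_of_gt hs)
  rw [Complex.exp_mul_I, ← Complex.ofReal_cos, ← Complex.ofReal_sin, hcos, hsin,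
    Real.cot_eq_cos_div_sin]
  simp only [Complex.ofReal_sub, Complex.ofReal_pow, Complex.ofReal_mul, Complex.ofReal_div,
    Complex.ofReal_ofNat]
  obtain ⟨s, hs'⟩ : ∃ s : ℂ, (Real.sin (θ / 2) : ℂ) = s := ⟨_, rfl⟩
  obtain ⟨c, hc'⟩ : ∃ c : ℂ, (Real.cos (θ / 2) : ℂ) = c := ⟨_, rfl⟩
  rw [hs', hc'] at hp ⊢
  rw [hs'] at hsne
  field_simp
  linear_combination (s - c * Complex.I) * hp + (-(2:ℂ) * c ^ 2 * s) * Complex.I_sq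

lemma norm_half_sub_mul_I (a : ℝ) : ‖-(1 / 2 : ℂ) - (a : ℂ) / 2 * Complex.I‖ ≤ 1 / 2 + |a| / 2 := by
  calc ‖-(1 / 2 : ℂ) - (a : ℂ) / 2 * Complex.I‖
      ≤ ‖(-(1 / 2 : ℂ))‖ + ‖(a : ℂ) / 2 * Complex.I‖ := norm_sub_le _ _
    _ = 1 / 2 + |a| / 2 := by
        rw [norm_neg, norm_mul, Complex.norm_I, mul_one, norm_div]
        simp

lemma norm_ofReal_div_two_mul_I (a : ℝ) : ‖(a : ℂ) / 2 * Complex.I‖ = |a| / 2 := by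
  rw [norm_mul, Complex.norm_I, mul_one, norm_div]
  simp

noncomputable def kcoef (x : ℝ) : ℂ := -(1 / 2 : ℂ) - (Real.cot (x / 2) : ℂ) / 2 * Complex.I

lemma norm_kcoef (x : ℝ) : ‖kcoef x‖ ≤ 1 / 2 + |Real.cot (x / 2)| / 2 :=
  norm_half_sub_mul_I _

lemma kcoef_sub (x y : ℝ) : kcoef x - kcoef y
    = ((Real.cot (y / 2) - Real.cot (x / 2) : ℝ) : ℂ) / 2 * Complex.I := by
  unfold kcoef
  push_cast
  ring

lemma norm_kcoef_sub (x y : ℝ) :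
    ‖kcoef x - kcoef y‖ = |Real.cot (y / 2) - Real.cot (x / 2)| / 2 := by
  rw [kcoef_sub, norm_ofReal_div_two_mul_I]

lemma abel_identity (c u : ℕ → ℂ) (A k : ℕ) :
    ∑ n ∈ Finset.Ico A (A + k + 1), c n * (u (n + 1) - u n)
      = c (A + k) * u (A + k + 1) - c A * u A
        - ∑ n ∈ Finset.Ico A (A + k), (c (n + 1) - c n) * u (n + 1) := by
  induction k with
  | zero =>
      simp only [Nat.add_zero, Finset.Ico_self, Finset.sum_empty]
      rw [show A + 0 + 1 = A + 1 from rfl]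
      rw [Finset.sum_Ico_succ_top (by omega), Finset.Ico_self, Finset.sum_empty]
      ring
  | succ k ih =>
      rw [show A + (k + 1) + 1 = (A + k + 1) + 1 from rfl,
        Finset.sum_Ico_succ_top (by omega), ih,
        show A + (k + 1) = (A + k) + 1 from rfl,
        Finset.sum_Ico_succ_top (by omega)]
      ring

lemma telescope_Ico (g : ℕ → ℝ) (A B : ℕ) (h : A ≤ B) :
    ∑ n ∈ Finset.Ico A B, (g (n + 1) - g n) = g B - g A := by
  rw [Finset.sum_Ico_eq_sum_range]
  have : ∀ i, g (A + i + 1) - g (A + i) = (fun j => g (A + j)) (i + 1) - (fun j => g (A + j)) i := by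
    intro i; simp [Nat.add_assoc]
  calc ∑ i ∈ Finset.range (B - A), (g (A + i + 1) - g (A + i))
      = ∑ i ∈ Finset.range (B - A), ((fun j => g (A + j)) (i + 1) - (fun j => g (A + j)) i) := by
        exact Finset.sum_congr rfl (fun i _ => this i)
    _ = g (A + (B - A)) - g (A + 0) := Finset.sum_range_sub (fun j => g (A + j)) (B - A)
    _ = g B - g A := by rw [Nat.add_sub_cancel' h, Nat.add_zero]

lemma kusmin_landau (F : ℕ → ℝ) (A B : ℕ) (δ : ℝ) (hδ : 0 < δ) (hδ1 : δ ≤ 1)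
    (hband : ∀ n, A ≤ n → n < B → δ ≤ F (n + 1) - F n ∧ F (n + 1) - F n ≤ 2 * π - δ)
    (hmono : ∀ m n, A ≤ m → m ≤ n → n < B → F (n + 1) - F n ≤ F (m + 1) - F m) :
    ‖∑ n ∈ Finset.Icc A B, Complex.exp ((F n : ℝ) * Complex.I)‖ ≤ 2 + 6 / δ := by
  have hπ := Real.pi_gt_three
  have h6 : (0:ℝ) ≤ 6 / δ := by positivity
  rcases lt_or_ge B A with hBA | hAB
  · rw [Finset.Icc_eq_empty (by omega), Finset.sum_empty, norm_zero]; linarith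
  rcases eq_or_lt_of_le hAB with hBA | hAB'
  · subst hBA
    rw [Finset.Icc_self, Finset.sum_singleton, Complex.norm_exp_ofReal_mul_I]
    linarith
  -- A < B
  set u : ℕ → ℂ := fun n => Complex.exp ((F n : ℝ) * Complex.I) with hu
  set θ : ℕ → ℝ := fun n => F (n + 1) - F n with hθ
  set g : ℕ → ℝ := fun n => Real.cot (θ n / 2) with hg
  set cn : ℕ → ℂ := fun n => kcoef (θ n) with hcn
  have hstep : ∀ n, A ≤ n → n < B → u n = cn n * (u (n + 1) - u n) := by
    intro n hn hnB
    obtain ⟨hb1, hb2⟩ := hband n hn hnB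
    have h1 : 0 < θ n := lt_of_lt_of_le hδ hb1
    have h2 : θ n < 2 * π := by
      have : θ n ≤ 2 * π - δ := hb2
      linarith
    have hkey := exp_theta_key h1 h2
    have hexp : u (n + 1) = u n * Complex.exp ((θ n : ℝ) * Complex.I) := by
      rw [hu]
      simp only
      rw [← Complex.exp_add]
      congr 1
      rw [hθ]
      push_cast
      ring
    rw [hexp]
    have : u n * Complex.exp ((θ n : ℝ) * Complex.I) - u n
        = u n * (Complex.exp ((θ n : ℝ) * Complex.I) - 1) := by ring
    rw [this]
    have hkey2 : (Complex.exp ((θ n : ℝ) * Complex.I) - 1) * cn n = 1 := by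
      rw [hcn]; simp only; unfold kcoef; exact hkey
    calc u n = u n * ((Complex.exp ((θ n : ℝ) * Complex.I) - 1) * cn n) := by
          rw [hkey2, mul_one]
      _ = cn n * (u n * (Complex.exp ((θ n : ℝ) * Complex.I) - 1)) := by ring
  -- g bounds and monotonicity
  have hgbound : ∀ n, A ≤ n → n < B → |g n| ≤ 2 / δ := by
    intro n hn hnB
    obtain ⟨hb1, hb2⟩ := hband n hn hnB
    exact abs_cot_le hδ hδ1 hb1 hb2
  have hgmono : ∀ n, A ≤ n → n + 1 < B → g n ≤ g (n + 1) := by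
    intro n hn hnB
    have hm := hmono n (n + 1) hn (by omega) hnB
    obtain ⟨hb1, _⟩ := hband (n + 1) (by omega) hnB
    obtain ⟨_, hb2⟩ := hband n hn (by omega)
    show Real.cot ((F (n + 1) - F n) / 2) ≤ Real.cot ((F (n + 1 + 1) - F (n + 1)) / 2)
    exact cot_anti (by linarith) (by linarith) (by linarith)
  have hcnorm : ∀ n, A ≤ n → n < B → ‖cn n‖ ≤ 1 / 2 + 1 / δ := by
    intro n hn hnB
    have := norm_kcoef (θ n)
    have h2 := hgbound n hn hnB
    rw [hcn]
    simp only
    calc ‖kcoef (θ n)‖ ≤ 1 / 2 + |Real.cot (θ n / 2)| / 2 := norm_kcoef _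
      _ ≤ 1 / 2 + 1 / δ := by
          have h3 : |Real.cot (θ n / 2)| ≤ 2 / δ := h2
          have h4 : (2:ℝ) / δ = 2 * (1 / δ) := by ring
          linarith
  -- decompose
  obtain ⟨k, hk⟩ : ∃ k, B = A + k + 1 := ⟨B - A - 1, by omega⟩
  subst hk
  rw [show Finset.Icc A (A + k + 1) = Finset.Ico A (A + k + 1 + 1) by
    rw [Finset.Ico_add_one_right_eq_Icc]]
  rw [Finset.sum_Ico_succ_top (by omega)]
  have hmain : ∑ n ∈ Finset.Ico A (A + k + 1), u n
      = cn (A + k) * u (A + k + 1) - cn A * u A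
        - ∑ n ∈ Finset.Ico A (A + k), (cn (n + 1) - cn n) * u (n + 1) := by
    rw [← abel_identity]
    exact Finset.sum_congr rfl (fun n hn => by
      rw [Finset.mem_Ico] at hn
      exact hstep n hn.1 (by omega))
  rw [hmain]
  have hunorm : ∀ n, ‖u n‖ = 1 := fun n => Complex.norm_exp_ofReal_mul_I _
  have hsum_diff : ∑ n ∈ Finset.Ico A (A + k), ‖(cn (n + 1) - cn n) * u (n + 1)‖ ≤ 2 / δ := by
    have heach : ∀ n ∈ Finset.Ico A (A + k), ‖(cn (n + 1) - cn n) * u (n + 1)‖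
        = (g (n + 1) - g n) / 2 := by
      intro n hn
      rw [Finset.mem_Ico] at hn
      rw [norm_mul, hunorm, mul_one, hcn]
      simp only
      rw [norm_kcoef_sub, abs_sub_comm]
      have h := hgmono n hn.1 (by omega)
      rw [hg] at h
      simp only at h
      rw [abs_of_nonneg (by linarith [h])]
    rw [Finset.sum_congr rfl heach]
    have := telescope_Ico (fun n => g n / 2) A (A + k) (by omega)
    calc ∑ n ∈ Finset.Ico A (A + k), (g (n + 1) - g n) / 2
        = ∑ n ∈ Finset.Ico A (A + k), ((fun m => g m / 2) (n + 1) - (fun m => g m / 2) n) := by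
          apply Finset.sum_congr rfl; intro n _; simp; ring
      _ = g (A + k) / 2 - g A / 2 := telescope_Ico (fun m => g m / 2) A (A + k) (by omega)
      _ ≤ 2 / δ := by
          have h1 := hgbound (A + k) (by omega) (by omega)
          have h2 := hgbound A (by omega) (by omega)
          rw [abs_le] at h1 h2
          linarith [h1.1, h1.2, h2.1, h2.2]
  calc ‖cn (A + k) * u (A + k + 1) - cn A * u A
        - ∑ n ∈ Finset.Ico A (A + k), (cn (n + 1) - cn n) * u (n + 1) + u (A + k + 1)‖
      ≤ ‖cn (A + k) * u (A + k + 1) - cn A * u A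
        - ∑ n ∈ Finset.Ico A (A + k), (cn (n + 1) - cn n) * u (n + 1)‖ + ‖u (A + k + 1)‖ :=
        norm_add_le _ _
    _ ≤ ‖cn (A + k) * u (A + k + 1) - cn A * u A‖
        + ‖∑ n ∈ Finset.Ico A (A + k), (cn (n + 1) - cn n) * u (n + 1)‖ + ‖u (A + k + 1)‖ := by
        have := norm_sub_le (cn (A + k) * u (A + k + 1) - cn A * u A)
          (∑ n ∈ Finset.Ico A (A + k), (cn (n + 1) - cn n) * u (n + 1))
        linarith
    _ ≤ (‖cn (A + k) * u (A + k + 1)‖ + ‖cn A * u A‖)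
        + ‖∑ n ∈ Finset.Ico A (A + k), (cn (n + 1) - cn n) * u (n + 1)‖ + ‖u (A + k + 1)‖ := by
        have := norm_sub_le (cn (A + k) * u (A + k + 1)) (cn A * u A)
        linarith
    _ ≤ (‖cn (A + k) * u (A + k + 1)‖ + ‖cn A * u A‖)
        + (∑ n ∈ Finset.Ico A (A + k), ‖(cn (n + 1) - cn n) * u (n + 1)‖) + ‖u (A + k + 1)‖ := by
        have := norm_sum_le (Finset.Ico A (A + k)) (fun n => (cn (n + 1) - cn n) * u (n + 1))
        linarith
    _ ≤ 2 + 6 / δ := by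
        have h1 : ‖cn (A + k) * u (A + k + 1)‖ ≤ 1 / 2 + 1 / δ := by
          rw [norm_mul, hunorm, mul_one]
          exact hcnorm (A + k) (by omega) (by omega)
        have h2 : ‖cn A * u A‖ ≤ 1 / 2 + 1 / δ := by
          rw [norm_mul, hunorm, mul_one]
          exact hcnorm A (by omega) (by omega)
        have h3 := hsum_diff
        have h4 : ‖u (A + k + 1)‖ = 1 := hunorm _
        have e1 : (2:ℝ) / δ = 2 * (1 / δ) := by ring
        have e3 : (6:ℝ) / δ = 6 * (1 / δ) := by ring
        have e4 : 0 < 1 / δ := by positivity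
        linarith

lemma log_succ_le {k : ℕ} (hk : 1 ≤ k) : Real.log (k + 1) - Real.log k ≤ 1 / k := by
  have hk0 : (0:ℝ) < k := by exact_mod_cast hk
  have h1 : Real.log ((k + 1 : ℝ) / k) ≤ (k + 1 : ℝ) / k - 1 :=
    Real.log_le_sub_one_of_pos (by positivity)
  rw [Real.log_div (by positivity) (by positivity)] at h1
  have h2 : (k + 1 : ℝ) / k - 1 = 1 / k := by field_simp; ring
  linarith [h1, h2.le, h2.ge]

lemma le_log_succ {k : ℕ} (hk : 1 ≤ k) : 1 / ((k:ℝ) + 1) ≤ Real.log (k + 1) - Real.log k := by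
  have hk0 : (0:ℝ) < k := by exact_mod_cast hk
  have h1 : Real.log ((k : ℝ) / (k + 1)) ≤ (k : ℝ) / (k + 1) - 1 :=
    Real.log_le_sub_one_of_pos (by positivity)
  rw [Real.log_div (by positivity) (by positivity)] at h1
  have h2 : (k : ℝ) / (k + 1) - 1 = -(1 / (k + 1)) := by field_simp; ring
  linarith

lemma d_step {k : ℕ} (hk : 1 ≤ k) :
    1 / ((k:ℝ) + 1) ^ 2
      ≤ (Real.log (k + 1) - Real.log k) - (Real.log (k + 1 + 1) - Real.log (k + 1)) := by
  have hk0 : (0:ℝ) < k := by exact_mod_cast hk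
  have hx : (0:ℝ) < ((k:ℝ) * (k + 2)) / ((k:ℝ) + 1) ^ 2 := by positivity
  have h1 := Real.log_le_sub_one_of_pos hx
  rw [Real.log_div (by positivity) (by positivity), Real.log_mul (by positivity) (by positivity),
    Real.log_pow] at h1
  have h2 : ((k:ℝ) * (k + 2)) / ((k:ℝ) + 1) ^ 2 - 1 = -(1 / ((k:ℝ) + 1) ^ 2) := by
    field_simp
    ring
  have h3 : ((k:ℝ) + 2) = ((k + 1 : ℕ) : ℝ) + 1 := by push_cast; ring
  have h4 : ((k:ℝ) + 1) = ((k + 1 : ℕ) : ℝ) := by push_cast; ring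
  rw [h3, h4] at h1
  push_cast at h1 ⊢
  have h5 : (k:ℝ) * ((k:ℝ) + 1 + 1) / ((k:ℝ) + 1) ^ 2 = (k:ℝ) * ((k:ℝ) + 2) / ((k:ℝ) + 1) ^ 2 := by
    ring
  linarith

lemma d_gap (U : ℕ) (m : ℕ) : ∀ n : ℕ, 1 ≤ m → m ≤ n → n + 1 ≤ U →
    ((n:ℝ) - m) / (U:ℝ) ^ 2
      ≤ (Real.log (m + 1) - Real.log m) - (Real.log (n + 1) - Real.log n) := by
  intro n
  induction n with
  | zero => intro h1 h2 _; omega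
  | succ n ih =>
      intro h1 h2 h3
      rcases eq_or_lt_of_le h2 with he | hlt
      · subst he; simp
      · have hmn : m ≤ n := by omega
        have hU : (0:ℝ) < U := by
          have : 1 ≤ U := by omega
          exact_mod_cast Nat.lt_of_lt_of_le Nat.zero_lt_one this
        have ih' := ih h1 hmn (by omega)
        have hstep := d_step (k := n) (by omega)
        have hle : 1 / ((U:ℝ)) ^ 2 ≤ 1 / ((n:ℝ) + 1) ^ 2 := by
          apply one_div_le_one_div_of_le (by positivity)
          have hnU : n + 1 ≤ U := by omega
          have : ((n:ℝ) + 1) ≤ (U:ℝ) := by exact_mod_cast hnU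
          nlinarith
        have hcast : ((n + 1 : ℕ) : ℝ) = (n : ℝ) + 1 := by push_cast; ring
        push_cast
        push_cast at ih' hstep
        have : ((n:ℝ) + 1 - m) / (U:ℝ) ^ 2 = ((n:ℝ) - m) / (U:ℝ) ^ 2 + 1 / (U:ℝ) ^ 2 := by
          field_simp
          ring
        linarith

lemma log_diff_anti {m n : ℕ} (h1 : 1 ≤ m) (h2 : m ≤ n) :
    Real.log (n + 1) - Real.log n ≤ Real.log (m + 1) - Real.log m := by
  have h := d_gap (n + 1) m n h1 h2 (le_refl _)
  have h0 : (0:ℝ) ≤ ((n:ℝ) - m) / ((n+1:ℕ):ℝ) ^ 2 := by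
    apply div_nonneg _ (by positivity)
    have : (m:ℝ) ≤ n := by exact_mod_cast h2
    linarith
  push_cast at h h0
  linarith

lemma trivial_bound (N : ℕ) (t : ℝ) :
    ‖∑ n ∈ Finset.Ioc N (2*N), Complex.exp ((t * Real.log n : ℝ) * Complex.I)‖ ≤ (N:ℝ) := by
  calc ‖∑ n ∈ Finset.Ioc N (2*N), Complex.exp ((t * Real.log n : ℝ) * Complex.I)‖
      ≤ ∑ n ∈ Finset.Ioc N (2*N), ‖Complex.exp ((t * Real.log n : ℝ) * Complex.I)‖ :=
        norm_sum_le _ _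
    _ = ∑ n ∈ Finset.Ioc N (2*N), 1 := by
        apply Finset.sum_congr rfl
        intro n _
        exact Complex.norm_exp_ofReal_mul_I _
    _ = ((Finset.Ioc N (2*N)).card : ℝ) := by rw [Finset.sum_const]; simp
    _ = (N:ℝ) := by rw [Nat.card_Ioc]; congr 1; omega

set_option maxHeartbeats 2000000 in
lemma main_pos (N : ℕ) (hN : 2 ≤ N) (t : ℝ) (ht : 0 < t) :
    ‖∑ n ∈ Finset.Ioc N (2 * N), Complex.exp ((t * Real.log n : ℝ) * Complex.I)‖
      ≤ 100 * ((N:ℝ) / t + Real.sqrt t) := by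
  have hπ := Real.pi_gt_three
  have hπ4 : π < 4 := Real.pi_lt_d2.trans (by norm_num)
  have hN0 : (0:ℝ) < N := by exact_mod_cast by omega
  have hsqrt0 : 0 ≤ Real.sqrt t := Real.sqrt_nonneg t
  by_cases hcase1 : t ≤ N
  · -- Kusmin-Landau directly
    set δ : ℝ := t / (2 * N) with hδdef
    have hδ : 0 < δ := by positivity
    have hδ1 : δ ≤ 1 := by
      rw [hδdef, div_le_one (by positivity)]
      linarith
    have hKL := kusmin_landau (fun n => t * Real.log n) (N + 1) (2 * N) δ hδ hδ1
      (by
        intro n hn hnB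
        have hn1 : (1:ℝ) ≤ n := by exact_mod_cast by omega
        have hn0 : (0:ℝ) < n := by linarith
        constructor
        · have hl := le_log_succ (k := n) (by omega)
          have : t * (1 / ((n:ℝ) + 1)) ≤ t * (Real.log (n + 1) - Real.log n) :=
            mul_le_mul_of_nonneg_left hl ht.le
          have h2N : (n:ℝ) + 1 ≤ 2 * N := by exact_mod_cast by omega
          have : t / (2 * N) ≤ t / ((n:ℝ) + 1) :=
            div_le_div_of_nonneg_left ht.le (by linarith) h2N
          have heq : t * (Real.log ((n:ℕ) + 1)) - t * Real.log n
              = t * (Real.log ((n:ℝ) + 1) - Real.log n) := by push_cast; ring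
          rw [hδdef]
          push_cast
          calc t / (2 * (N:ℝ)) ≤ t / ((n:ℝ) + 1) := by assumption
            _ = t * (1 / ((n:ℝ) + 1)) := by ring
            _ ≤ t * (Real.log ((n:ℝ) + 1) - Real.log n) := by assumption
            _ = t * Real.log ((n:ℝ) + 1) - t * Real.log n := by ring
        · have hu := log_succ_le (k := n) (by omega)
          have h1 : t * (Real.log (n + 1) - Real.log n) ≤ t * (1 / n) :=
            mul_le_mul_of_nonneg_left hu ht.le
          have h2 : t * (1 / (n:ℝ)) ≤ t / n := by rw [mul_one_div]
          have h3 : t / (n:ℝ) ≤ t / (N:ℝ) := by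
            apply div_le_div_of_nonneg_left ht.le hN0
            exact_mod_cast by omega
          have h4 : t / (N:ℝ) ≤ 1 := by
            rw [div_le_one hN0]; linarith
          have h5 : (1:ℝ) ≤ 2 * π - δ := by
            have : δ ≤ 1 := hδ1
            linarith
          push_cast
          have heq : t * Real.log ((n:ℝ) + 1) - t * Real.log n
              = t * (Real.log ((n:ℝ) + 1) - Real.log n) := by ring
          rw [heq]
          push_cast at h1
          linarith)
      (by
        intro m n hm hmn hnB
        have hanti := log_diff_anti (m := m) (n := n) (by omega) hmn
        push_cast at hanti ⊢
        have h1 : t * (Real.log ((n:ℝ) + 1) - Real.log n)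
            ≤ t * (Real.log ((m:ℝ) + 1) - Real.log m) :=
          mul_le_mul_of_nonneg_left hanti ht.le
        linarith)
    rw [Finset.Icc_add_one_left_eq_Ioc] at hKL
    have h6δ : 6 / δ = 12 * N / t := by
      rw [hδdef]
      field_simp
      ring
    have hNt : (1:ℝ) ≤ N / t := by
      rw [le_div_iff₀ ht]; linarith
    calc ‖∑ n ∈ Finset.Ioc N (2 * N), Complex.exp ((t * Real.log n : ℝ) * Complex.I)‖
        ≤ 2 + 6 / δ := hKL
      _ = 2 + 12 * N / t := by rw [h6δ]
      _ ≤ 2 * (N / t) + 12 * (N / t) := by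
          have : 12 * (N:ℝ) / t = 12 * (N / t) := by ring
          linarith
      _ = 14 * (N / t) := by ring
      _ ≤ 100 * (N / t + Real.sqrt t) := by nlinarith [hNt]
  · push_neg at hcase1
    by_cases hsq : Real.sqrt t ≤ N
    case neg =>
      push_neg at hsq
      have := trivial_bound N t
      have hNt : (0:ℝ) ≤ N / t := by positivity
      calc ‖∑ n ∈ Finset.Ioc N (2 * N), Complex.exp ((t * Real.log n : ℝ) * Complex.I)‖
          ≤ (N:ℝ) := trivial_bound N t
        _ ≤ Real.sqrt t := hsq.le
        _ ≤ 100 * ((N:ℝ) / t + Real.sqrt t) := by nlinarith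
    case pos =>
      obtain ⟨s, hsdef⟩ : ∃ s : ℝ, s = Real.sqrt t := ⟨_, rfl⟩
      rw [← hsdef]
      have hs2 : s ^ 2 = t := by rw [hsdef]; exact Real.sq_sqrt ht.le
      have hs0 : 0 < s := by rw [hsdef]; exact Real.sqrt_pos.2 ht
      have hsq' : s ≤ N := by rw [hsdef]; exact hsq
      obtain ⟨δ, hδdef⟩ : ∃ d : ℝ, d = s / N := ⟨_, rfl⟩
      have hδ : 0 < δ := by rw [hδdef]; positivity
      have hδ1 : δ ≤ 1 := by rw [hδdef, div_le_one hN0]; exact hsq'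
      obtain ⟨θ, hθdef⟩ : ∃ f : ℕ → ℝ, f = fun n : ℕ => t * (Real.log ((n + 1 : ℕ)) - Real.log (n : ℕ)) := ⟨_, rfl⟩
      have hθ_nonneg : ∀ n : ℕ, 1 ≤ n → 0 ≤ θ n := by
        intro n hn
        have := le_log_succ (k := n) hn
        have hp : (0:ℝ) < 1 / ((n:ℝ) + 1) := by positivity
        have := mul_le_mul_of_nonneg_left this ht.le
        rw [hθdef]
        simp only
        push_cast
        nlinarith
      have hθ_le : ∀ n : ℕ, N < n → θ n ≤ t / N := by
        intro n hn
        have h1 := log_succ_le (k := n) (by omega)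
        have h2 : t * (Real.log ((n:ℝ) + 1) - Real.log n) ≤ t * (1 / n) :=
          mul_le_mul_of_nonneg_left h1 ht.le
        have h3 : t * (1 / (n:ℝ)) = t / n := by ring
        have h4 : t / (n:ℝ) ≤ t / N := by
          apply div_le_div_of_nonneg_left ht.le hN0
          exact_mod_cast by omega
        rw [hθdef]
        simp only
        push_cast
        linarith
      have hθ_anti : ∀ m n : ℕ, 1 ≤ m → m ≤ n → θ n ≤ θ m := by
        intro m n h1 h2
        have := log_diff_anti (m := m) (n := n) h1 h2
        rw [hθdef]
        simp only
        push_cast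
        push_cast at this
        nlinarith
      have hθ_gap : ∀ m n : ℕ, N < m → m ≤ n → n ≤ 2 * N →
          t * (((n:ℝ) - m) / ((2 * N:ℕ) + 1:ℝ) ^ 2) ≤ θ m - θ n := by
        intro m n h1 h2 h3
        have := d_gap (2 * N + 1) m n (by omega) h2 (by omega)
        rw [hθdef]
        simp only
        push_cast
        push_cast at this
        nlinarith
      obtain ⟨idx, hidxdef⟩ : ∃ f : ℕ → ℕ, f = fun n => ⌊(θ n + δ) / (2 * π)⌋₊ := ⟨_, rfl⟩
      obtain ⟨V, hVdef⟩ : ∃ v : ℕ, v = ⌊t / N⌋₊ + 2 := ⟨_, rfl⟩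
      have hidx_lt : ∀ n ∈ Finset.Ioc N (2 * N), idx n ∈ Finset.range V := by
        intro n hn
        rw [Finset.mem_Ioc] at hn
        rw [Finset.mem_range, hidxdef]
        simp only
        have hnn : 0 ≤ (θ n + δ) / (2 * π) := by
          apply div_nonneg _ (by positivity)
          have := hθ_nonneg n (by omega)
          linarith
        rw [Nat.floor_lt hnn]
        have h1 : θ n ≤ t / N := hθ_le n hn.1
        have h2 : t / N < (⌊t / N⌋₊ : ℝ) + 1 := Nat.lt_floor_add_one _
        have h3 : (θ n + δ) / (2 * π) ≤ (θ n + δ) / 1 := by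
          apply div_le_div_of_nonneg_left _ (by norm_num) (by linarith)
          have := hθ_nonneg n (by omega)
          linarith
        rw [hVdef]
        push_cast
        rw [div_one] at h3
        linarith
      -- membership facts
      have hmem_lb : ∀ ν : ℕ, ∀ n : ℕ, idx n = ν → 1 ≤ n → 2 * π * ν - δ ≤ θ n := by
        intro ν n hn h1
        rw [hidxdef] at hn
        simp only at hn
        have hnn : 0 ≤ (θ n + δ) / (2 * π) := by
          apply div_nonneg _ (by positivity)
          have := hθ_nonneg n h1
          linarith
        have := (Nat.floor_eq_iff hnn).1 hn
        have h2 : (ν:ℝ) ≤ (θ n + δ) / (2 * π) := this.1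
        rw [le_div_iff₀ (by positivity)] at h2
        linarith
      have hmem_ub : ∀ ν : ℕ, ∀ n : ℕ, idx n = ν → 1 ≤ n → θ n + δ < 2 * π * (ν + 1) := by
        intro ν n hn h1
        rw [hidxdef] at hn
        simp only at hn
        have hnn : 0 ≤ (θ n + δ) / (2 * π) := by
          apply div_nonneg _ (by positivity)
          have := hθ_nonneg n h1
          linarith
        have := (Nat.floor_eq_iff hnn).1 hn
        have h2 : (θ n + δ) / (2 * π) < (ν:ℝ) + 1 := this.2
        rw [div_lt_iff₀ (by positivity)] at h2
        linarith
      -- fiber decomposition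
      rw [← Finset.sum_fiberwise_of_maps_to hidx_lt
        (fun n => Complex.exp ((t * Real.log n : ℝ) * Complex.I))]
      have hfiber : ∀ ν ∈ Finset.range V,
          ‖∑ n ∈ (Finset.Ioc N (2 * N)).filter (fun n => idx n = ν),
            Complex.exp ((t * Real.log n : ℝ) * Complex.I)‖ ≤ 3 + 24 * (N / s) := by
        intro ν _
        have hsum := Finset.sum_filter_add_sum_filter_not
          ((Finset.Ioc N (2 * N)).filter (fun n => idx n = ν))
          (fun n => 2 * π * ν + δ ≤ θ n)
          (fun n => Complex.exp ((t * Real.log n : ℝ) * Complex.I))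
        rw [← hsum]
        have hgoodb : ‖∑ n ∈ ((Finset.Ioc N (2 * N)).filter (fun n => idx n = ν)).filter
              (fun n => 2 * π * ν + δ ≤ θ n),
            Complex.exp ((t * Real.log n : ℝ) * Complex.I)‖ ≤ 2 + 6 * ((N:ℝ) / s) := by
          have h6δ : 6 / δ = 6 * ((N:ℝ) / s) := by
            rw [hδdef, div_div_eq_mul_div]
            ring
          rcases Finset.eq_empty_or_nonempty (((Finset.Ioc N (2 * N)).filter
              (fun n => idx n = ν)).filter (fun n => 2 * π * ν + δ ≤ θ n)) with hG | hG
          · rw [hG, Finset.sum_empty, norm_zero]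
            positivity
          set G := ((Finset.Ioc N (2 * N)).filter (fun n => idx n = ν)).filter
            (fun n => 2 * π * ν + δ ≤ θ n) with hGdef
          obtain ⟨A, hAdef⟩ : ∃ a, a = G.min' hG := ⟨_, rfl⟩
          obtain ⟨B, hBdef⟩ : ∃ b, b = G.max' hG := ⟨_, rfl⟩
          have hAmem := Finset.min'_mem G hG
          have hBmem := Finset.max'_mem G hG
          rw [← hAdef] at hAmem
          rw [← hBdef] at hBmem
          have hGsub : ∀ x ∈ G, (x ∈ Finset.Ioc N (2*N) ∧ idx x = ν) ∧ 2 * π * ν + δ ≤ θ x := by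
            intro x hx
            rw [hGdef] at hx
            simp only [Finset.mem_filter] at hx
            exact ⟨⟨hx.1.1, hx.1.2⟩, hx.2⟩
          obtain ⟨⟨hAIoc, hA3⟩, hA4⟩ := hGsub A hAmem
          obtain ⟨⟨hBIoc, hB3⟩, hB4⟩ := hGsub B hBmem
          rw [Finset.mem_Ioc] at hAIoc hBIoc
          have hub := hmem_ub ν A hA3 (by omega)
          have hGeq : G = Finset.Icc A B := by
            apply Finset.Subset.antisymm
            · intro x hx
              rw [Finset.mem_Icc]
              exact ⟨hAdef ▸ Finset.min'_le G x hx, hBdef ▸ Finset.le_max' G x hx⟩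
            · intro x hx
              rw [Finset.mem_Icc] at hx
              have hx1 : N < x := lt_of_lt_of_le hAIoc.1 hx.1
              have hx2 : x ≤ 2 * N := le_trans hx.2 hBIoc.2
              have hθxA : θ x ≤ θ A := hθ_anti A x (by omega) hx.1
              have hθxB : θ B ≤ θ x := hθ_anti x B (by omega) hx.2
              have hgood : 2 * π * ν + δ ≤ θ x := le_trans hB4 hθxB
              rw [hGdef]
              simp only [Finset.mem_filter, Finset.mem_Ioc]
              refine ⟨⟨⟨hx1, hx2⟩, ?_⟩, hgood⟩
              rw [hidxdef]
              simp only
              have hθx0 : 0 ≤ θ x := hθ_nonneg x (by omega)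
              rw [Nat.floor_eq_iff (by positivity)]
              constructor
              · rw [le_div_iff₀ (by positivity)]
                linarith
              · rw [div_lt_iff₀ (by positivity)]
                push_cast
                linarith
          rw [hGeq]
          have hterm : ∀ n ∈ Finset.Icc A B,
              Complex.exp ((t * Real.log n : ℝ) * Complex.I)
                = Complex.exp (((fun m : ℕ => t * Real.log m - 2 * π * ν * m) n : ℝ)
                    * Complex.I) := by
            intro n _
            simp only
            have hsplit2 : ((t * Real.log n - 2 * π * ν * n : ℝ) : ℂ) * Complex.I
                = ((t * Real.log n : ℝ) : ℂ) * Complex.I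
                  + (-(ν * n : ℤ) : ℂ) * (2 * (π:ℝ) * Complex.I) := by
              push_cast
              ring
            rw [hsplit2, Complex.exp_add]
            have : ((-(ν * n : ℤ) : ℂ)) * (2 * (π:ℝ) * Complex.I)
                = ((-(ν * n : ℤ) : ℤ) : ℂ) * (2 * (π:ℂ) * Complex.I) := by push_cast; ring
            rw [this, Complex.exp_int_mul_two_pi_mul_I, mul_one]
          rw [Finset.sum_congr rfl hterm]
          have hKL2 := kusmin_landau (fun m : ℕ => t * Real.log m - 2 * π * ν * m) A B δ hδ hδ1
            (by
              intro n hnA hnB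
              have hnG : n ∈ G := by
                rw [hGeq, Finset.mem_Icc]
                exact ⟨hnA, hnB.le⟩
              obtain ⟨⟨hnIoc, hn3⟩, hn4⟩ := hGsub n hnG
              rw [Finset.mem_Ioc] at hnIoc
              have hub2 := hmem_ub ν n hn3 (by omega)
              have heq : (t * Real.log (n+1) - 2 * π * ν * (n+1))
                  - (t * Real.log n - 2 * π * ν * n) = θ n - 2 * π * ν := by
                rw [hθdef]
                simp only
                push_cast
                ring
              push_cast at heq
              constructor
              · push_cast
                rw [heq]
                linarith
              · push_cast
                rw [heq]
                linarith
            )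
            (by
              intro m n hm hmn hnB
              have hmG : m ∈ G := by
                rw [hGeq, Finset.mem_Icc]
                exact ⟨hm, by omega⟩
              obtain ⟨⟨hmIoc, _⟩, _⟩ := hGsub m hmG
              rw [Finset.mem_Ioc] at hmIoc
              have hanti := hθ_anti m n (by omega) hmn
              have heqm : (t * Real.log (m+1) - 2 * π * ν * (m+1))
                  - (t * Real.log m - 2 * π * ν * m) = θ m - 2 * π * ν := by
                rw [hθdef]
                simp only
                push_cast
                ring
              have heqn : (t * Real.log (n+1) - 2 * π * ν * (n+1))
                  - (t * Real.log n - 2 * π * ν * n) = θ n - 2 * π * ν := by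
                rw [hθdef]
                simp only
                push_cast
                ring
              push_cast at heqm heqn
              push_cast
              rw [heqm, heqn]
              linarith
            )
          calc ‖∑ n ∈ Finset.Icc A B,
                Complex.exp (((fun m : ℕ => t * Real.log m - 2 * π * ν * m) n : ℝ)
                  * Complex.I)‖
              ≤ 2 + 6 / δ := hKL2
            _ = 2 + 6 * ((N:ℝ) / s) := by rw [h6δ]
        have hbadb : ‖∑ n ∈ ((Finset.Ioc N (2 * N)).filter (fun n => idx n = ν)).filter
              (fun n => ¬(2 * π * ν + δ ≤ θ n)),
            Complex.exp ((t * Real.log n : ℝ) * Complex.I)‖ ≤ 1 + 18 * ((N:ℝ) / s) := by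
          set Bd := ((Finset.Ioc N (2 * N)).filter (fun n => idx n = ν)).filter
            (fun n => ¬(2 * π * ν + δ ≤ θ n)) with hBddef
          have hcard : ‖∑ n ∈ Bd, Complex.exp ((t * Real.log n : ℝ) * Complex.I)‖
              ≤ (Bd.card : ℝ) := by
            calc ‖∑ n ∈ Bd, Complex.exp ((t * Real.log n : ℝ) * Complex.I)‖
                ≤ ∑ n ∈ Bd, ‖Complex.exp ((t * Real.log n : ℝ) * Complex.I)‖ := norm_sum_le _ _
              _ = ∑ n ∈ Bd, 1 := by
                  exact Finset.sum_congr rfl (fun n _ => Complex.norm_exp_ofReal_mul_I _)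
              _ = (Bd.card : ℝ) := by rw [Finset.sum_const]; simp
          rcases Finset.eq_empty_or_nonempty Bd with hBd | hBd
          · rw [hBd, Finset.sum_empty, norm_zero]
            positivity
          obtain ⟨m, hmdef⟩ : ∃ a, a = Bd.min' hBd := ⟨_, rfl⟩
          obtain ⟨M, hMdef⟩ : ∃ b, b = Bd.max' hBd := ⟨_, rfl⟩
          have hmmem := Finset.min'_mem Bd hBd
          have hMmem := Finset.max'_mem Bd hBd
          rw [← hmdef] at hmmem
          rw [← hMdef] at hMmem
          have hBdsub : ∀ x ∈ Bd, (x ∈ Finset.Ioc N (2*N) ∧ idx x = ν) ∧ θ x < 2 * π * ν + δ := by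
            intro x hx
            rw [hBddef] at hx
            simp only [Finset.mem_filter, not_le] at hx
            exact ⟨⟨hx.1.1, hx.1.2⟩, hx.2⟩
          obtain ⟨⟨hmIoc, hm3⟩, hm4⟩ := hBdsub m hmmem
          obtain ⟨⟨hMIoc, hM3⟩, hM4⟩ := hBdsub M hMmem
          rw [Finset.mem_Ioc] at hmIoc hMIoc
          have hmM : m ≤ M := by
            rw [hmdef, hMdef]
            exact Finset.min'_le _ _ (hMdef ▸ hMmem)
          have hlbM : 2 * π * ν - δ ≤ θ M := hmem_lb ν M hM3 (by omega)
          have hgap := hθ_gap m M hmIoc.1 hmM hMIoc.2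
          -- θ m - θ M < 2δ
          have h2δ : θ m - θ M < 2 * δ := by linarith
          have hc : (0:ℝ) < (((2 * N : ℕ):ℝ) + 1) ^ 2 := by positivity
          have hMm : t * ((M:ℝ) - m) < 2 * δ * (((2 * N : ℕ):ℝ) + 1) ^ 2 := by
            have h0 := lt_of_le_of_lt hgap h2δ
            have h2 := mul_lt_mul_of_pos_right h0 hc
            have h3 : t * (((M:ℝ) - m) / (((2 * N : ℕ):ℝ) + 1) ^ 2) * (((2 * N : ℕ):ℝ) + 1) ^ 2
                = t * ((M:ℝ) - m) := by
              field_simp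
            rw [h3] at h2
            exact h2
          have h9 : (((2 * N : ℕ):ℝ) + 1) ^ 2 ≤ 9 * (N:ℝ) ^ 2 := by
            have hN2 : (2:ℝ) ≤ (N:ℝ) := by exact_mod_cast hN
            push_cast
            nlinarith
          have hδN : 2 * δ * (9 * (N:ℝ) ^ 2) = 18 * (N:ℝ) * s := by
            rw [hδdef]
            field_simp
            ring
          have hfinal : ((M:ℝ) - m) < 18 * ((N:ℝ) / s) := by
            have h1 : t * ((M:ℝ) - m) < 18 * (N:ℝ) * s := by
              have hδ0 : 0 ≤ 2 * δ := by linarith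
              nlinarith
            rw [← hs2] at h1
            have hr : 18 * ((N:ℝ) / s) = 18 * (N:ℝ) / s := by ring
            rw [hr, lt_div_iff₀ hs0]
            nlinarith
          have hsub : Bd ⊆ Finset.Icc m M := by
            intro x hx
            rw [Finset.mem_Icc]
            exact ⟨hmdef ▸ Finset.min'_le _ _ hx, hMdef ▸ Finset.le_max' _ _ hx⟩
          have hcard2 : (Bd.card : ℝ) ≤ ((M:ℝ) - m) + 1 := by
            have := Finset.card_le_card hsub
            rw [Nat.card_Icc] at this
            have h2 : (Bd.card : ℝ) ≤ ((M + 1 - m : ℕ) : ℝ) := by exact_mod_cast this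
            rw [Nat.cast_sub (by omega)] at h2
            push_cast at h2
            linarith
          calc ‖∑ n ∈ Bd, Complex.exp ((t * Real.log n : ℝ) * Complex.I)‖
              ≤ (Bd.card : ℝ) := hcard
            _ ≤ ((M:ℝ) - m) + 1 := hcard2
            _ ≤ 1 + 18 * ((N:ℝ) / s) := by linarith
        calc ‖(∑ n ∈ ((Finset.Ioc N (2 * N)).filter (fun n => idx n = ν)).filter
              (fun n => 2 * π * ν + δ ≤ θ n),
              Complex.exp ((t * Real.log n : ℝ) * Complex.I))
            + ∑ n ∈ ((Finset.Ioc N (2 * N)).filter (fun n => idx n = ν)).filter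
              (fun n => ¬(2 * π * ν + δ ≤ θ n)),
              Complex.exp ((t * Real.log n : ℝ) * Complex.I)‖
            ≤ (2 + 6 * ((N:ℝ) / s)) + (1 + 18 * ((N:ℝ) / s)) := by
              have := norm_add_le (∑ n ∈ ((Finset.Ioc N (2 * N)).filter
                  (fun n => idx n = ν)).filter (fun n => 2 * π * ν + δ ≤ θ n),
                  Complex.exp ((t * Real.log n : ℝ) * Complex.I))
                (∑ n ∈ ((Finset.Ioc N (2 * N)).filter (fun n => idx n = ν)).filter
                  (fun n => ¬(2 * π * ν + δ ≤ θ n)),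
                  Complex.exp ((t * Real.log n : ℝ) * Complex.I))
              linarith [hgoodb, hbadb]
          _ = 3 + 24 * ((N:ℝ) / s) := by ring
      calc ‖∑ ν ∈ Finset.range V, ∑ n ∈ (Finset.Ioc N (2 * N)).filter (fun n => idx n = ν),
            Complex.exp ((t * Real.log n : ℝ) * Complex.I)‖
          ≤ ∑ ν ∈ Finset.range V, ‖∑ n ∈ (Finset.Ioc N (2 * N)).filter (fun n => idx n = ν),
            Complex.exp ((t * Real.log n : ℝ) * Complex.I)‖ := norm_sum_le _ _
        _ ≤ ∑ ν ∈ Finset.range V, (3 + 24 * ((N:ℝ) / s)) := Finset.sum_le_sum hfiber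
        _ = (V : ℝ) * (3 + 24 * ((N:ℝ) / s)) := by
            rw [Finset.sum_const, Finset.card_range, nsmul_eq_mul]
        _ ≤ (3 * (t / N)) * (3 + 24 * ((N:ℝ) / s)) := by
            have hV : (V : ℝ) ≤ t / N + 2 := by
              rw [hVdef]
              push_cast
              have := Nat.floor_le (a := t / N) (by positivity)
              linarith
            have ht1 : (1:ℝ) ≤ t / N := by
              rw [le_div_iff₀ hN0]; linarith
            have hpos : (0:ℝ) ≤ 3 + 24 * ((N:ℝ) / s) := by positivity
            nlinarith
        _ ≤ 100 * ((N:ℝ) / t + s) := by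
            have hts : t / s = s := by
              rw [eq_comm, eq_div_iff hs0.ne']
              nlinarith
            have htN : t / N ≤ s := by
              rw [div_le_iff₀ hN0]
              nlinarith
            have hNs : t / N * (N / s) = t / s := by
              field_simp
            have hNt0 : (0:ℝ) ≤ N / t := by positivity
            have hexpand : (3 * (t / N)) * (3 + 24 * ((N:ℝ) / s))
                = 9 * (t / N) + 72 * (t / N * (N / s)) := by ring
            rw [hexpand, hNs, hts]
            linarith

lemma cpow_eq_exp (n : ℕ) (hn : 0 < n) (t : ℝ) :
    (n : ℂ) ^ ((t : ℂ) * Complex.I) = Complex.exp ((t * Real.log n : ℝ) * Complex.I) := by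
  have hn0 : (n : ℂ) ≠ 0 := by
    exact_mod_cast Nat.cast_ne_zero.2 (by omega)
  rw [Complex.cpow_def_of_ne_zero hn0]
  congr 1
  have hlog : Complex.log (n : ℂ) = ((Real.log n : ℝ) : ℂ) := by
    rw [show ((n:ℕ):ℂ) = (((n:ℕ):ℝ):ℂ) by push_cast; ring]
    rw [← Complex.ofReal_log (by positivity)]
  rw [hlog]
  push_cast
  ring

end Aux

open Complex Finset

theorem stmt_3 :
    ∃ c : ℝ, 0 < c ∧ ∀ N : ℕ, 2 ≤ N → ∀ t : ℝ, t ≠ 0 →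
      ‖∑ n ∈ Finset.Ioc N (2 * N), (n : ℂ) ^ ((t : ℂ) * Complex.I)‖ ≤
        c * ((N : ℝ) / |t| + Real.sqrt |t|) := by
  refine ⟨100, by norm_num, ?_⟩
  intro N hN t ht
  have hrw : ∀ u : ℝ, ∑ n ∈ Finset.Ioc N (2 * N), (n : ℂ) ^ ((u : ℂ) * Complex.I)
      = ∑ n ∈ Finset.Ioc N (2 * N), Complex.exp ((u * Real.log n : ℝ) * Complex.I) := by
    intro u
    apply Finset.sum_congr rfl
    intro n hn
    rw [Finset.mem_Ioc] at hn
    exact cpow_eq_exp n (by omega) u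
  rw [hrw]
  rcases lt_or_gt_of_ne ht with htneg | htpos
  · have habs : |t| = -t := abs_of_neg htneg
    have hconj : ∑ n ∈ Finset.Ioc N (2 * N), Complex.exp (((-t) * Real.log n : ℝ) * Complex.I)
        = (starRingEnd ℂ) (∑ n ∈ Finset.Ioc N (2 * N),
            Complex.exp ((t * Real.log n : ℝ) * Complex.I)) := by
      rw [map_sum]
      apply Finset.sum_congr rfl
      intro n _
      rw [← Complex.exp_conj]
      congr 1
      rw [map_mul, Complex.conj_I, Complex.conj_ofReal]
      push_cast
      ring
    have hnorm : ‖∑ n ∈ Finset.Ioc N (2 * N), Complex.exp ((t * Real.log n : ℝ) * Complex.I)‖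
        = ‖∑ n ∈ Finset.Ioc N (2 * N), Complex.exp (((-t) * Real.log n : ℝ) * Complex.I)‖ := by
      rw [hconj]
      exact (RCLike.norm_conj _).symm
    rw [hnorm, habs]
    exact main_pos N hN (-t) (by linarith)
  · have habs : |t| = t := abs_of_pos htpos
    rw [habs]
    exact main_pos N hN t htpos
end

section
/- Let N ≥ 2 and t ≠ 0. Then Σ over integer quadruples (x₁,x₂,x₃,x₄) with N < xᵢ ≤ 2N of min(1, N⁴/(|t|·|x₂²x₃² − x₁²x₄²|)) is at most C(ε)·(N^(2+ε) + N^(4+ε)/|t|) for every ε > 0. -/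
open Finset

-- harmonic sum bound
lemma harm_le (M : ℕ) : ∑ j ∈ Icc 1 M, (1:ℝ)/j ≤ 1 + Real.log M := by
  induction M with
  | zero => simp
  | succ M ih =>
    rcases Nat.eq_zero_or_pos M with hM | hM
    · subst hM; simp
    rw [Finset.sum_Icc_succ_top (by omega)]
    have h1 : Real.log ((M:ℝ)/(M+1)) ≤ (M:ℝ)/(M+1) - 1 :=
      Real.log_le_sub_one_of_pos (by positivity)
    have h2 : Real.log ((M:ℝ)/(M+1)) = Real.log M - Real.log (M+1) := by
      rw [Real.log_div (by positivity) (by positivity)]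
    have h3 : (M:ℝ)/(M+1) - 1 = -(1/(M+1)) := by field_simp; ring
    have h4 : (1:ℝ)/((M:ℕ)+1) ≤ Real.log (M+1) - Real.log M := by
      rw [h2] at h1; rw [h3] at h1; linarith
    push_cast
    push_cast at ih h4
    linarith

lemma log_sum_le {δ : ℝ} (hδ : 0 < δ) (N M : ℕ) (hN : 2 ≤ N) (hM : M ≤ 4*N) :
    ∑ j ∈ Icc 1 M, (1:ℝ)/j ≤ (1 + 3/δ) * (N:ℝ)^δ := by
  have h0 : (0:ℝ) < N := by positivity
  have h1 : (∑ j ∈ Icc 1 M, (1:ℝ)/j) ≤ 1 + Real.log M := harm_le M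
  have h2 : Real.log M ≤ Real.log ((N:ℝ)^(3:ℕ)) := by
    rcases Nat.eq_zero_or_pos M with h | h
    · subst h; simp; positivity
    · apply Real.log_le_log (by positivity)
      have h8 : 4 ≤ N*N := Nat.mul_le_mul hN hN
      have h7 : M ≤ N^3 := by nlinarith
      exact_mod_cast h7
  have h3 : Real.log ((N:ℝ)^(3:ℕ)) = 3 * Real.log N := by
    rw [Real.log_pow]; push_cast; ring
  have h4 : Real.log N ≤ (N:ℝ)^δ / δ := Real.log_le_rpow_div (by positivity) hδ
  have h5 : (1:ℝ) ≤ (N:ℝ)^δ := Real.one_le_rpow (by exact_mod_cast (by omega : 1 ≤ N)) hδ.le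
  have h6 : (0:ℝ) < (N:ℝ)^δ := by positivity
  calc (∑ j ∈ Icc 1 M, (1:ℝ)/j) ≤ 1 + 3 * ((N:ℝ)^δ/δ) := by linarith
    _ ≤ (N:ℝ)^δ + 3 * ((N:ℝ)^δ/δ) := by linarith
    _ = (1 + 3/δ) * (N:ℝ)^δ := by field_simp

lemma succ_le_aux (k a : ℕ) (hk : 1 ≤ k) :
    ((a:ℝ)+1) ≤ (4:ℝ)^k * (2:ℝ)^((a:ℝ)/(k:ℝ)) := by
  have hk0 : 0 < k := hk
  have hdm := Nat.div_add_mod a k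
  have hml : a % k < k := Nat.mod_lt a hk0
  have h1 : a + 1 ≤ k * (a/k + 1) := by nlinarith
  have h2 : ((a/k : ℕ):ℝ) + 1 ≤ (2:ℝ)^((a:ℝ)/(k:ℝ)) := by
    have hq : ((a/k : ℕ):ℝ) + 1 ≤ (2:ℝ)^(a/k : ℕ) := by
      exact_mod_cast Nat.lt_two_pow_self (n := a/k)
    have hq2 : (2:ℝ)^(a/k : ℕ) = (2:ℝ)^(((a/k : ℕ):ℝ)) := by
      rw [Real.rpow_natCast]
    have hq3 : ((a/k : ℕ):ℝ) ≤ (a:ℝ)/(k:ℝ) := Nat.cast_div_le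
    calc ((a/k : ℕ):ℝ) + 1 ≤ (2:ℝ)^(((a/k : ℕ):ℝ)) := by rw [← hq2]; exact hq
      _ ≤ (2:ℝ)^((a:ℝ)/(k:ℝ)) := Real.rpow_le_rpow_of_exponent_le one_le_two hq3
  have h3 : (k:ℝ) ≤ (4:ℝ)^k := by
    exact_mod_cast (Nat.lt_pow_self (n := k) (by norm_num : 1 < 4)).le
  have h4 : ((a:ℝ)+1) ≤ (k:ℝ) * (((a/k:ℕ):ℝ) + 1) := by exact_mod_cast h1
  calc ((a:ℝ)+1) ≤ (k:ℝ) * (((a/k:ℕ):ℝ) + 1) := h4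
    _ ≤ (4:ℝ)^k * (2:ℝ)^((a:ℝ)/(k:ℝ)) := by
        apply mul_le_mul h3 h2 (by positivity) (by positivity)

lemma succ_le_aux_large (k p a : ℕ) (hk : 1 ≤ k) (hp : 2^k ≤ p) :
    ((a:ℝ)+1) ≤ (p:ℝ)^((a:ℝ)/(k:ℝ)) := by
  have hk0 : (k:ℝ) ≠ 0 := by positivity
  have hp0 : (0:ℝ) ≤ (p:ℝ) := by positivity
  have h1 : (2:ℝ) ≤ (p:ℝ)^((1:ℝ)/(k:ℝ)) := by
    have : ((2:ℝ)^(k:ℕ))^((1:ℝ)/(k:ℝ)) = 2 := by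
      rw [← Real.rpow_natCast 2 k, ← Real.rpow_mul (by norm_num)]
      rw [mul_one_div, div_self hk0, Real.rpow_one]
    rw [← this]
    apply Real.rpow_le_rpow (by positivity) (by exact_mod_cast hp) (by positivity)
  have h2 : ((a:ℝ)+1) ≤ (2:ℝ)^(a:ℕ) := by exact_mod_cast Nat.lt_two_pow_self (n := a)
  have h3 : ((p:ℝ)^((1:ℝ)/(k:ℝ)))^(a:ℕ) = (p:ℝ)^((a:ℝ)/(k:ℝ)) := by
    rw [← Real.rpow_natCast ((p:ℝ)^((1:ℝ)/(k:ℝ))) a, ← Real.rpow_mul hp0]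
    congr 1; ring
  calc ((a:ℝ)+1) ≤ (2:ℝ)^(a:ℕ) := h2
    _ ≤ ((p:ℝ)^((1:ℝ)/(k:ℝ)))^(a:ℕ) := pow_le_pow_left₀ (by norm_num) h1 a
    _ = (p:ℝ)^((a:ℝ)/(k:ℝ)) := h3

lemma divisor_bound {ε : ℝ} (hε : 0 < ε) :
    ∃ C : ℝ, 1 ≤ C ∧ ∀ n : ℕ, n ≠ 0 → (n.divisors.card : ℝ) ≤ C * (n:ℝ)^ε := by
  set k : ℕ := max 1 ⌈1/ε⌉₊ with hkdef
  have hk : 1 ≤ k := le_max_left _ _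
  have hk0 : (0:ℝ) < (k:ℝ) := by exact_mod_cast hk
  have hek : 1/(k:ℝ) ≤ ε := by
    rw [div_le_iff₀ hk0]
    have h1 : 1/ε ≤ (⌈1/ε⌉₊ : ℝ) := Nat.le_ceil _
    have h2 : (⌈1/ε⌉₊:ℝ) ≤ (k:ℝ) := by exact_mod_cast le_max_right _ _
    rw [div_le_iff₀ hε] at h1
    nlinarith
  refine ⟨(4:ℝ)^(k*2^k), one_le_pow₀ (by norm_num), fun n hn => ?_⟩
  have hn1 : 1 ≤ n := Nat.one_le_iff_ne_zero.mpr hn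
  have h1 : (n.divisors.card : ℝ) = ∏ p ∈ n.primeFactors, ((n.factorization p : ℝ) + 1) := by
    rw [Nat.card_divisors hn]; push_cast; rfl
  have h2 : (n:ℝ) = ∏ p ∈ n.primeFactors, (p:ℝ)^(n.factorization p : ℕ) := by
    conv_lhs => rw [← Nat.factorization_prod_pow_eq_self hn]
    rw [Nat.prod_factorization_eq_prod_primeFactors]
    push_cast; rfl
  have h3 : (n:ℝ)^((1:ℝ)/(k:ℝ)) = ∏ p ∈ n.primeFactors, (p:ℝ)^((n.factorization p : ℝ)/(k:ℝ)) := by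
    rw [h2, ← Real.finset_prod_rpow _ _ (fun p _ => by positivity) _]
    apply Finset.prod_congr rfl
    intro p _
    rw [← Real.rpow_natCast (p:ℝ) (n.factorization p), ← Real.rpow_mul (by positivity)]
    congr 1; ring
  have h4 : (n.divisors.card : ℝ) ≤
      (∏ p ∈ n.primeFactors, (if p < 2^k then (4:ℝ)^k else 1)) * (n:ℝ)^((1:ℝ)/(k:ℝ)) := by
    rw [h1, h3, ← Finset.prod_mul_distrib]
    apply Finset.prod_le_prod (fun p _ => by positivity)
    intro p hp
    by_cases hcase : p < 2^k
    · simp only [hcase, if_pos]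
      have hp2 : (2:ℝ) ≤ (p:ℝ) := by
        exact_mod_cast (Nat.prime_of_mem_primeFactors hp).two_le
      calc ((n.factorization p : ℝ) + 1)
          ≤ (4:ℝ)^k * (2:ℝ)^((n.factorization p : ℝ)/(k:ℝ)) :=
            succ_le_aux k (n.factorization p) hk
        _ ≤ (4:ℝ)^k * (p:ℝ)^((n.factorization p : ℝ)/(k:ℝ)) := by
            apply mul_le_mul_of_nonneg_left _ (by positivity)
            apply Real.rpow_le_rpow (by norm_num) hp2 (by positivity)
    · simp only [hcase, if_neg, not_false_iff, one_mul]
      exact succ_le_aux_large k p (n.factorization p) hk (by omega)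
  have h5 : (∏ p ∈ n.primeFactors, (if p < 2^k then (4:ℝ)^k else 1)) ≤ (4:ℝ)^(k*2^k) := by
    rw [← Finset.prod_filter]
    rw [Finset.prod_const]
    have hcard : (n.primeFactors.filter (fun p => p < 2^k)).card ≤ 2^k := by
      calc (n.primeFactors.filter (fun p => p < 2^k)).card
          ≤ (Finset.range (2^k)).card := Finset.card_le_card (fun x hx => by
            simp only [Finset.mem_range]
            exact (Finset.mem_filter.1 hx).2)
        _ = 2^k := Finset.card_range _
    calc ((4:ℝ)^k)^(n.primeFactors.filter (fun p => p < 2^k)).card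
        = (4:ℝ)^(k * (n.primeFactors.filter (fun p => p < 2^k)).card) := by rw [pow_mul]
      _ ≤ (4:ℝ)^(k*2^k) := by
          apply pow_le_pow_right₀ (by norm_num)
          exact Nat.mul_le_mul_left k hcard
  have h6 : (n:ℝ)^((1:ℝ)/(k:ℝ)) ≤ (n:ℝ)^ε :=
    Real.rpow_le_rpow_of_exponent_le (by exact_mod_cast hn1) hek
  have h7 : (0:ℝ) ≤ (n:ℝ)^((1:ℝ)/(k:ℝ)) := by positivity
  calc (n.divisors.card : ℝ) ≤ _ * (n:ℝ)^((1:ℝ)/(k:ℝ)) := h4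
    _ ≤ (4:ℝ)^(k*2^k) * (n:ℝ)^((1:ℝ)/(k:ℝ)) := mul_le_mul_of_nonneg_right h5 h7
    _ ≤ (4:ℝ)^(k*2^k) * (n:ℝ)^ε := mul_le_mul_of_nonneg_left h6 (by positivity)

def KD (a b : ℕ) : ℕ := ((a:ℤ) - (b:ℤ)).natAbs

noncomputable def wt (N : ℕ) (t : ℝ) (j : ℕ) : ℝ := min 1 ((N:ℝ)^2/(2* |t| * j))

noncomputable def g1 (x₁ x₂ x₃ x₄ : ℕ) : ℝ := if x₂*x₃ = x₁*x₄ then 1 else 0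

noncomputable def g2 (N : ℕ) (t : ℝ) (x₁ x₂ x₃ x₄ : ℕ) : ℝ :=
  if x₂*x₃ ≠ x₁*x₄ ∧ KD (x₂*x₃) (x₁*x₄) ≤ 2*N then wt N t (KD (x₂*x₃) (x₁*x₄)) else 0

noncomputable def g3 (N : ℕ) (t : ℝ) (x₁ x₂ x₃ x₄ : ℕ) : ℝ :=
  if x₁ ≤ KD (x₂*x₃) (x₁*x₄) then (N:ℝ)^2/(2* |t| * (KD (x₂*x₃) (x₁*x₄))) else 0

lemma wt_nonneg (N : ℕ) (t : ℝ) (j : ℕ) : 0 ≤ wt N t j := by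
  unfold wt
  apply le_min (by norm_num)
  positivity

lemma g1_nonneg (x₁ x₂ x₃ x₄ : ℕ) : 0 ≤ g1 x₁ x₂ x₃ x₄ := by
  unfold g1; split <;> norm_num

lemma g2_nonneg (N : ℕ) (t : ℝ) (x₁ x₂ x₃ x₄ : ℕ) : 0 ≤ g2 N t x₁ x₂ x₃ x₄ := by
  unfold g2; split
  · exact wt_nonneg N t _
  · exact le_refl 0

lemma g3_nonneg (N : ℕ) (t : ℝ) (x₁ x₂ x₃ x₄ : ℕ) : 0 ≤ g3 N t x₁ x₂ x₃ x₄ := by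
  unfold g3; split
  · positivity
  · exact le_refl 0

lemma pointwise (N : ℕ) (hN : 2 ≤ N) (t : ℝ) (ht : t ≠ 0) {x₁ x₂ x₃ x₄ : ℕ}
    (h1 : x₁ ∈ Finset.Ioc N (2*N)) (h2 : x₂ ∈ Finset.Ioc N (2*N))
    (h3 : x₃ ∈ Finset.Ioc N (2*N)) (h4 : x₄ ∈ Finset.Ioc N (2*N)) :
    (if x₂^2*x₃^2 = x₁^2*x₄^2 then (1:ℝ)
      else min 1 ((N:ℝ)^4 / (|t| * |(x₂:ℝ)^2*(x₃:ℝ)^2 - (x₁:ℝ)^2*(x₄:ℝ)^2|)))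
    ≤ g1 x₁ x₂ x₃ x₄ + g2 N t x₁ x₂ x₃ x₄ + g3 N t x₁ x₂ x₃ x₄ := by
  obtain ⟨h1a, h1b⟩ := Finset.mem_Ioc.1 h1
  obtain ⟨h2a, h2b⟩ := Finset.mem_Ioc.1 h2
  obtain ⟨h3a, h3b⟩ := Finset.mem_Ioc.1 h3
  obtain ⟨h4a, h4b⟩ := Finset.mem_Ioc.1 h4
  have hts : 0 < |t| := abs_pos.2 ht
  have hN0 : (0:ℝ) < N := by exact_mod_cast (by omega : 0 < N)
  have hsq : (x₂^2*x₃^2 = x₁^2*x₄^2) ↔ (x₂*x₃ = x₁*x₄) := by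
    constructor
    · intro h
      have h' : (x₂*x₃)^2 = (x₁*x₄)^2 := by rw [mul_pow, mul_pow]; exact h
      exact Nat.pow_left_injective (by norm_num) h'
    · intro h
      rw [← mul_pow, ← mul_pow, h]
  by_cases hd : x₂*x₃ = x₁*x₄
  · rw [if_pos (hsq.2 hd)]
    have hg1 : g1 x₁ x₂ x₃ x₄ = 1 := if_pos hd
    have hg2 : g2 N t x₁ x₂ x₃ x₄ = 0 := by
      unfold g2; rw [if_neg]; simp [hd]
    have hg3 : 0 ≤ g3 N t x₁ x₂ x₃ x₄ := g3_nonneg N t x₁ x₂ x₃ x₄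
    rw [hg1, hg2]
    linarith
  · rw [if_neg (fun h => hd (hsq.1 h))]
    have hg1 : g1 x₁ x₂ x₃ x₄ = 0 := if_neg hd
    set kn := KD (x₂*x₃) (x₁*x₄) with hkn
    have hk1 : 1 ≤ kn := by
      rw [hkn]; unfold KD
      have hne : ((x₂*x₃:ℕ):ℤ) ≠ ((x₁*x₄:ℕ):ℤ) := by exact_mod_cast hd
      omega
    have hkcast : (kn:ℝ) = |((x₂*x₃:ℕ):ℝ) - ((x₁*x₄:ℕ):ℝ)| := by
      rw [hkn]; unfold KD
      rw [Nat.cast_natAbs]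
      push_cast
      ring_nf
    have habs : |(x₂:ℝ)^2*(x₃:ℝ)^2 - (x₁:ℝ)^2*(x₄:ℝ)^2|
        = (((x₂*x₃:ℕ):ℝ) + ((x₁*x₄:ℕ):ℝ)) * (kn:ℝ) := by
      have e1 : (x₂:ℝ)^2*(x₃:ℝ)^2 - (x₁:ℝ)^2*(x₄:ℝ)^2
          = (((x₂*x₃:ℕ):ℝ) + ((x₁*x₄:ℕ):ℝ)) * (((x₂*x₃:ℕ):ℝ) - ((x₁*x₄:ℕ):ℝ)) := by
        push_cast; ring
      rw [e1, abs_mul, abs_of_nonneg (by positivity), hkcast]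
    have hA : (N:ℝ)^2 + 1 ≤ ((x₂*x₃:ℕ):ℝ) := by
      have : N^2 + 1 ≤ x₂*x₃ := by nlinarith
      exact_mod_cast this
    have hB : (N:ℝ)^2 + 1 ≤ ((x₁*x₄:ℕ):ℝ) := by
      have : N^2 + 1 ≤ x₁*x₄ := by nlinarith
      exact_mod_cast this
    have hknR : (1:ℝ) ≤ (kn:ℝ) := by exact_mod_cast hk1
    have hmain : min 1 ((N:ℝ)^4 / (|t| * |(x₂:ℝ)^2*(x₃:ℝ)^2 - (x₁:ℝ)^2*(x₄:ℝ)^2|))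
        ≤ min 1 ((N:ℝ)^2/(2* |t| * (kn:ℝ))) := by
      apply min_le_min (le_refl 1)
      rw [habs]
      have hkn0 : (0:ℝ) < (kn:ℝ) := by linarith
      have hP : (0:ℝ) ≤ |t| * (kn:ℝ) * (N:ℝ)^2 := by positivity
      have hAB : 2*(N:ℝ)^2 + 2 ≤ ((x₂*x₃:ℕ):ℝ) + ((x₁*x₄:ℕ):ℝ) := by linarith
      rw [div_le_div_iff₀
        (mul_pos hts (mul_pos (by linarith [sq_nonneg (N:ℝ)]) hkn0))
        (mul_pos (mul_pos two_pos hts) hkn0)]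
      nlinarith [mul_le_mul_of_nonneg_left hAB hP, hP]
    by_cases hcl : kn ≤ 2*N
    · have hg2 : g2 N t x₁ x₂ x₃ x₄ = min 1 ((N:ℝ)^2/(2* |t| * (kn:ℝ))) := by
        unfold g2 wt
        rw [if_pos ⟨hd, hcl⟩]
      rw [hg1, hg2]
      have := g3_nonneg N t x₁ x₂ x₃ x₄
      linarith [hmain]
    · have hg2 : g2 N t x₁ x₂ x₃ x₄ = 0 := by
        unfold g2; rw [if_neg]; tauto
      have hg3 : g3 N t x₁ x₂ x₃ x₄ = (N:ℝ)^2/(2* |t| * (kn:ℝ)) := by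
        unfold g3; rw [if_pos (by omega)]
      rw [hg1, hg2, hg3]
      calc min 1 ((N:ℝ)^4 / (|t| * |(x₂:ℝ)^2*(x₃:ℝ)^2 - (x₁:ℝ)^2*(x₄:ℝ)^2|))
          ≤ min 1 ((N:ℝ)^2/(2* |t| * (kn:ℝ))) := hmain
        _ ≤ (N:ℝ)^2/(2* |t| * (kn:ℝ)) := min_le_right _ _
        _ ≤ 0 + 0 + (N:ℝ)^2/(2* |t| * (kn:ℝ)) := by linarith

lemma countA (s : Finset ℕ) (m : ℕ) (hm : m ≠ 0) :
    ((s ×ˢ s).filter (fun p => p.1 * p.2 = m)).card ≤ m.divisors.card := by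
  apply Finset.card_le_card_of_injOn (fun p => p.1)
  · intro p hp
    rw [Finset.mem_coe, Finset.mem_filter] at hp
    exact Nat.mem_divisors.2 ⟨⟨p.2, hp.2.symm⟩, hm⟩
  · intro p hp q hq h
    rw [Finset.mem_coe, Finset.mem_filter] at hp hq
    have h' : p.1 = q.1 := h
    have h1 : p.1 ≠ 0 := by
      intro h0; rw [h0, zero_mul] at hp; exact hm hp.2.symm
    have h2 : p.2 = q.2 := by
      have heq := hp.2.trans hq.2.symm
      rw [← h'] at heq
      exact Nat.eq_of_mul_eq_mul_left (Nat.pos_of_ne_zero h1) heq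
    exact Prod.ext h' h2

lemma sum4_swap (s : Finset ℕ) (F : ℕ → ℕ → ℕ → ℕ → ℝ) :
    ∑ x₁ ∈ s, ∑ x₂ ∈ s, ∑ x₃ ∈ s, ∑ x₄ ∈ s, F x₁ x₂ x₃ x₄
      = ∑ x₁ ∈ s, ∑ x₄ ∈ s, ∑ x₂ ∈ s, ∑ x₃ ∈ s, F x₁ x₂ x₃ x₄ :=
  Finset.sum_congr rfl fun x₁ _ => by
    calc ∑ x₂ ∈ s, ∑ x₃ ∈ s, ∑ x₄ ∈ s, F x₁ x₂ x₃ x₄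
        = ∑ x₂ ∈ s, ∑ x₄ ∈ s, ∑ x₃ ∈ s, F x₁ x₂ x₃ x₄ :=
          Finset.sum_congr rfl fun x₂ _ => Finset.sum_comm
      _ = ∑ x₄ ∈ s, ∑ x₂ ∈ s, ∑ x₃ ∈ s, F x₁ x₂ x₃ x₄ := Finset.sum_comm

lemma diag_bound (N : ℕ) (hN : 2 ≤ N) (D : ℝ)
    (hD : ∀ m : ℕ, m ≠ 0 → m ≤ N^5 → ((Nat.divisors m).card : ℝ) ≤ D) :
    ∑ x₁ ∈ Finset.Ioc N (2*N), ∑ x₂ ∈ Finset.Ioc N (2*N), ∑ x₃ ∈ Finset.Ioc N (2*N),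
      ∑ x₄ ∈ Finset.Ioc N (2*N), g1 x₁ x₂ x₃ x₄ ≤ (N:ℝ)^2 * D := by
  have hD0 : (0:ℝ) ≤ D := by
    refine le_trans ?_ (hD 1 one_ne_zero (Nat.one_le_pow _ _ (by omega)))
    positivity
  set s := Finset.Ioc N (2*N) with hs
  have hcard : s.card = N := by rw [hs, Nat.card_Ioc]; omega
  have inner : ∀ x₁ ∈ s, ∀ x₄ ∈ s, (∑ x₂ ∈ s, ∑ x₃ ∈ s, g1 x₁ x₂ x₃ x₄) ≤ D := by
    intro x₁ h1 x₄ h4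
    obtain ⟨h1a, h1b⟩ := Finset.mem_Ioc.1 h1
    obtain ⟨h4a, h4b⟩ := Finset.mem_Ioc.1 h4
    have hm0 : x₁*x₄ ≠ 0 := Nat.mul_ne_zero (by omega) (by omega)
    have hm5 : x₁*x₄ ≤ N^5 := by
      have h8 : 2^3 ≤ N^3 := Nat.pow_le_pow_left hN 3
      calc x₁*x₄ ≤ (2*N)*(2*N) := Nat.mul_le_mul h1b h4b
        _ = 4*N^2 := by ring
        _ ≤ N^3*N^2 := Nat.mul_le_mul_right _ (by omega)
        _ = N^5 := by ring
    calc ∑ x₂ ∈ s, ∑ x₃ ∈ s, g1 x₁ x₂ x₃ x₄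
        = ∑ p ∈ s ×ˢ s, g1 x₁ p.1 p.2 x₄ := by rw [← Finset.sum_product']
      _ = (((s ×ˢ s).filter (fun p => p.1*p.2 = x₁*x₄)).card : ℝ) := by
          unfold g1; rw [Finset.sum_boole]
      _ ≤ ((x₁*x₄ : ℕ).divisors.card : ℝ) := by
          exact_mod_cast countA s (x₁*x₄) hm0
      _ ≤ D := hD _ hm0 hm5
  calc ∑ x₁ ∈ s, ∑ x₂ ∈ s, ∑ x₃ ∈ s, ∑ x₄ ∈ s, g1 x₁ x₂ x₃ x₄
      = ∑ x₁ ∈ s, ∑ x₄ ∈ s, ∑ x₂ ∈ s, ∑ x₃ ∈ s, g1 x₁ x₂ x₃ x₄ := sum4_swap s g1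
    _ ≤ ∑ x₁ ∈ s, ∑ x₄ ∈ s, D := by
        apply Finset.sum_le_sum
        intro x₁ h1
        apply Finset.sum_le_sum
        intro x₄ h4
        exact inner x₁ h1 x₄ h4
    _ = (N:ℝ)^2 * D := by
        rw [Finset.sum_const, Finset.sum_const, hcard, nsmul_eq_mul, nsmul_eq_mul]
        ring

lemma close_inner (N : ℕ) (hN : 2 ≤ N) (t : ℝ) (D : ℝ)
    (hD : ∀ m : ℕ, m ≠ 0 → m ≤ N^5 → ((Nat.divisors m).card : ℝ) ≤ D)
    (x₁ x₄ : ℕ) (h1 : x₁ ∈ Finset.Ioc N (2*N)) (h4 : x₄ ∈ Finset.Ioc N (2*N)) :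
    ∑ x₂ ∈ Finset.Ioc N (2*N), ∑ x₃ ∈ Finset.Ioc N (2*N), g2 N t x₁ x₂ x₃ x₄
      ≤ (2*D) * ∑ j ∈ Finset.Icc 1 (2*N), wt N t j := by
  classical
  set s := Finset.Ioc N (2*N) with hs
  obtain ⟨h1a, h1b⟩ := Finset.mem_Ioc.1 h1
  obtain ⟨h4a, h4b⟩ := Finset.mem_Ioc.1 h4
  set m := x₁ * x₄ with hm
  have hmge : N^2 + 2*N < m := by
    have hmul := Nat.mul_le_mul (show N+1 ≤ x₁ by omega) (show N+1 ≤ x₄ by omega)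
    have hexp : (N+1)*(N+1) = N^2+2*N+1 := by ring
    omega
  have hmle : m ≤ 4*N^2 := by
    have hmul := Nat.mul_le_mul h1b h4b
    have hexp : (2*N)*(2*N) = 4*N^2 := by ring
    omega
  have hNN : 2*N ≤ N^2 := by
    have := Nat.mul_le_mul_right N hN
    have hexp : N*N = N^2 := by ring
    omega
  have h5N : 5*N^2 ≤ N^5 := by
    have h8 : 2^3 ≤ N^3 := Nat.pow_le_pow_left hN 3
    calc 5*N^2 ≤ N^3*N^2 := Nat.mul_le_mul_right _ (by omega)
      _ = N^5 := by ring
  have hD0 : (0:ℝ) ≤ D := by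
    refine le_trans ?_ (hD 1 one_ne_zero (Nat.one_le_pow _ _ (by omega)))
    positivity
  set P := (s ×ˢ s).filter (fun p => p.1*p.2 ≠ m ∧ KD (p.1*p.2) m ≤ 2*N) with hP
  have e1 : ∑ x₂ ∈ s, ∑ x₃ ∈ s, g2 N t x₁ x₂ x₃ x₄
      = ∑ p ∈ P, wt N t (KD (p.1*p.2) m) := by
    rw [hP, Finset.sum_filter, ← Finset.sum_product']
    rfl
  rw [e1]
  have himg : ∀ j ∈ P.image (fun p => KD (p.1*p.2) m), 1 ≤ j ∧ j ≤ 2*N := by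
    intro j hj
    obtain ⟨p, hpP, hpj⟩ := Finset.mem_image.1 hj
    rw [hP, Finset.mem_filter] at hpP
    obtain ⟨hss, hne, hle⟩ := hpP
    constructor
    · rw [← hpj]
      unfold KD
      have : ((p.1*p.2 : ℕ):ℤ) ≠ ((m:ℕ):ℤ) := by exact_mod_cast hne
      omega
    · rw [← hpj]; exact hle
  have hfib : ∀ j ∈ P.image (fun p => KD (p.1*p.2) m),
      ((Finset.filter (fun p => KD (p.1*p.2) m = j) P).card : ℝ) ≤ 2*D := by
    intro j hj
    obtain ⟨hj1, hj2⟩ := himg j hj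
    have hmj0 : m + j ≠ 0 := by omega
    have hmj5 : m + j ≤ N^5 := by omega
    have hmj0' : m - j ≠ 0 := by omega
    have hmj5' : m - j ≤ N^5 := by omega
    have hsub : Finset.filter (fun p => KD (p.1*p.2) m = j) P
        ⊆ ((s ×ˢ s).filter (fun p => p.1*p.2 = m + j))
          ∪ ((s ×ˢ s).filter (fun p => p.1*p.2 = m - j)) := by
      intro p hp
      rw [Finset.mem_filter, hP, Finset.mem_filter] at hp
      obtain ⟨⟨hss, hne, _⟩, hKj⟩ := hp
      rw [Finset.mem_union, Finset.mem_filter, Finset.mem_filter]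
      unfold KD at hKj
      have hcase : p.1*p.2 = m + j ∨ p.1*p.2 = m - j := by
        have hgen : ∀ a : ℕ, ((a:ℤ) - (m:ℤ)).natAbs = j → a ≠ m → j ≤ m →
            a = m + j ∨ a = m - j := by intro a ha hane hjm; omega
        exact hgen _ hKj hne (by omega)
      rcases hcase with h | h
      · exact Or.inl ⟨hss, h⟩
      · exact Or.inr ⟨hss, h⟩
    calc ((Finset.filter (fun p => KD (p.1*p.2) m = j) P).card : ℝ)
        ≤ ((((s ×ˢ s).filter (fun p => p.1*p.2 = m + j))
            ∪ ((s ×ˢ s).filter (fun p => p.1*p.2 = m - j))).card : ℝ) := by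
          exact_mod_cast Finset.card_le_card hsub
      _ ≤ ((((s ×ˢ s).filter (fun p => p.1*p.2 = m + j)).card : ℝ)
            + (((s ×ˢ s).filter (fun p => p.1*p.2 = m - j)).card : ℝ)) := by
          exact_mod_cast Finset.card_union_le _ _
      _ ≤ (((m+j).divisors.card : ℝ) + ((m-j).divisors.card : ℝ)) := by
          have c1 := countA s (m+j) hmj0
          have c2 := countA s (m-j) hmj0'
          have c1' : ((((s ×ˢ s).filter (fun p => p.1*p.2 = m + j)).card : ℝ))
              ≤ ((m+j).divisors.card : ℝ) := by exact_mod_cast c1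
          have c2' : ((((s ×ˢ s).filter (fun p => p.1*p.2 = m - j)).card : ℝ))
              ≤ ((m-j).divisors.card : ℝ) := by exact_mod_cast c2
          linarith
      _ ≤ D + D := add_le_add (hD _ hmj0 hmj5) (hD _ hmj0' hmj5')
      _ = 2*D := by ring
  calc ∑ p ∈ P, wt N t (KD (p.1*p.2) m)
      = ∑ j ∈ P.image (fun p => KD (p.1*p.2) m),
        (Finset.filter (fun p => KD (p.1*p.2) m = j) P).card • wt N t j :=
        Finset.sum_comp _ _
    _ ≤ ∑ j ∈ P.image (fun p => KD (p.1*p.2) m), (2*D) * wt N t j := by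
        apply Finset.sum_le_sum
        intro j hj
        rw [nsmul_eq_mul]
        exact mul_le_mul_of_nonneg_right (hfib j hj) (wt_nonneg N t j)
    _ ≤ ∑ j ∈ Finset.Icc 1 (2*N), (2*D) * wt N t j := by
        apply Finset.sum_le_sum_of_subset_of_nonneg
        · intro j hj
          obtain ⟨hj1, hj2⟩ := himg j hj
          exact Finset.mem_Icc.2 ⟨hj1, hj2⟩
        · intro j _ _
          exact mul_nonneg (by linarith) (wt_nonneg N t j)
    _ = (2*D) * ∑ j ∈ Finset.Icc 1 (2*N), wt N t j := by rw [Finset.mul_sum]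

lemma far_inner (N : ℕ) (hN : 2 ≤ N) (t : ℝ) (ht : t ≠ 0)
    (x₁ x₂ x₃ : ℕ) (h1 : x₁ ∈ Finset.Ioc N (2*N)) (h2 : x₂ ∈ Finset.Ioc N (2*N))
    (h3 : x₃ ∈ Finset.Ioc N (2*N)) :
    ∑ x₄ ∈ Finset.Ioc N (2*N), g3 N t x₁ x₂ x₃ x₄
      ≤ 2 * ∑ j ∈ Finset.Icc 1 (4*N), (N:ℝ)/(2 * |t| * j) := by
  classical
  set s := Finset.Ioc N (2*N) with hs
  obtain ⟨h1a, h1b⟩ := Finset.mem_Ioc.1 h1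
  obtain ⟨h2a, h2b⟩ := Finset.mem_Ioc.1 h2
  obtain ⟨h3a, h3b⟩ := Finset.mem_Ioc.1 h3
  have hx1 : 0 < x₁ := by omega
  have hts : 0 < |t| := abs_pos.2 ht
  have hN0 : (0:ℝ) < N := by exact_mod_cast (by omega : 0 < N)
  set m := x₂ * x₃ with hm
  have hmle : m ≤ 4*N^2 := by
    have hmul := Nat.mul_le_mul h2b h3b
    have hexp : (2*N)*(2*N) = 4*N^2 := by ring
    omega
  set F := s.filter (fun x₄ => x₁ ≤ KD m (x₁*x₄)) with hF
  have e1 : ∑ x₄ ∈ s, g3 N t x₁ x₂ x₃ x₄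
      = ∑ x₄ ∈ F, (N:ℝ)^2/(2 * |t| * (KD m (x₁*x₄))) := by
    rw [hF, Finset.sum_filter]
    rfl
  rw [e1]
  have hKb : ∀ x₄ ∈ s, KD m (x₁*x₄) ≤ 4*N^2 := by
    intro x₄ hx4
    obtain ⟨h4a, h4b⟩ := Finset.mem_Ioc.1 hx4
    have hBle : x₁*x₄ ≤ 4*N^2 := by
      have hmul := Nat.mul_le_mul h1b h4b
      have hexp : (2*N)*(2*N) = 4*N^2 := by ring
      omega
    have hgen : ∀ c B K : ℕ, K = ((m:ℤ) - (B:ℤ)).natAbs → m ≤ c → B ≤ c → K ≤ c := by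
      intro c B K hK hmc hBc; omega
    exact hgen (4*N^2) (x₁*x₄) _ rfl hmle hBle
  have step1 : ∀ x₄ ∈ F, (N:ℝ)^2/(2 * |t| * (KD m (x₁*x₄)))
      ≤ (N:ℝ)/(2 * |t| * ((KD m (x₁*x₄) / x₁ : ℕ):ℝ)) := by
    intro x₄ hx4
    rw [hF, Finset.mem_filter] at hx4
    obtain ⟨hx4s, hx4K⟩ := hx4
    have hq1 : 1 ≤ KD m (x₁*x₄) / x₁ := (Nat.one_le_div_iff hx1).2 hx4K
    have hqK : (KD m (x₁*x₄) / x₁) * x₁ ≤ KD m (x₁*x₄) := Nat.div_mul_le_self _ _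
    have hKR : ((KD m (x₁*x₄) / x₁ : ℕ):ℝ) * ((N:ℝ)+1) ≤ ((KD m (x₁*x₄) : ℕ):ℝ) := by
      have hnat : (KD m (x₁*x₄) / x₁) * (N+1) ≤ KD m (x₁*x₄) :=
        le_trans (Nat.mul_le_mul_left _ (by omega)) hqK
      exact_mod_cast hnat
    have hqR : (1:ℝ) ≤ ((KD m (x₁*x₄) / x₁ : ℕ):ℝ) := by exact_mod_cast hq1
    have hKpos : (0:ℝ) < ((KD m (x₁*x₄) : ℕ):ℝ) := by nlinarith
    have hstep : (N:ℝ)*(((KD m (x₁*x₄) / x₁ : ℕ):ℝ) * ((N:ℝ)+1))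
        ≤ (N:ℝ)*((KD m (x₁*x₄) : ℕ):ℝ) := mul_le_mul_of_nonneg_left hKR hN0.le
    have hNq : (0:ℝ) ≤ (N:ℝ)*((KD m (x₁*x₄) / x₁ : ℕ):ℝ) := by positivity
    rw [div_le_div_iff₀ (by positivity) (by nlinarith)]
    nlinarith [hstep, hNq, hts]
  calc ∑ x₄ ∈ F, (N:ℝ)^2/(2 * |t| * (KD m (x₁*x₄)))
      ≤ ∑ x₄ ∈ F, (N:ℝ)/(2 * |t| * ((KD m (x₁*x₄) / x₁ : ℕ):ℝ)) :=
        Finset.sum_le_sum step1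
    _ = ∑ j ∈ F.image (fun x₄ => KD m (x₁*x₄) / x₁),
        (Finset.filter (fun x₄ => KD m (x₁*x₄) / x₁ = j) F).card • ((N:ℝ)/(2 * |t| * j)) :=
        Finset.sum_comp (fun j : ℕ => (N:ℝ)/(2 * |t| * (j:ℝ))) (fun x₄ => KD m (x₁*x₄) / x₁)
    _ ≤ ∑ j ∈ F.image (fun x₄ => KD m (x₁*x₄) / x₁), 2 * ((N:ℝ)/(2 * |t| * j)) := by
        apply Finset.sum_le_sum
        intro j hj
        rw [nsmul_eq_mul]
        apply mul_le_mul_of_nonneg_right _ (by positivity)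
        -- card fiber ≤ 2
        have hsub : Finset.filter (fun x₄ => KD m (x₁*x₄) / x₁ = j) F
            ⊆ (s.filter (fun y => m + j*x₁ ≤ x₁*y ∧ x₁*y < m + j*x₁ + x₁))
              ∪ (s.filter (fun y => x₁*y + j*x₁ ≤ m ∧ m < x₁*y + j*x₁ + x₁)) := by
          intro y hy
          rw [Finset.mem_filter, hF, Finset.mem_filter] at hy
          obtain ⟨⟨hys, hyK⟩, hyq⟩ := hy
          have hlow : j*x₁ ≤ KD m (x₁*y) := (Nat.le_div_iff_mul_le hx1).1 (le_of_eq hyq.symm)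
          have hhigh : KD m (x₁*y) < (j+1)*x₁ :=
            (Nat.div_lt_iff_lt_mul hx1).1 (by omega)
          rw [add_one_mul] at hhigh
          have key : (m + j*x₁ ≤ x₁*y ∧ x₁*y < m + j*x₁ + x₁)
              ∨ (x₁*y + j*x₁ ≤ m ∧ m < x₁*y + j*x₁ + x₁) := by
            have hgen : ∀ B A K : ℕ, K = ((m:ℤ) - (B:ℤ)).natAbs → A ≤ K → K < A + x₁ →
                (m + A ≤ B ∧ B < m + A + x₁) ∨ (B + A ≤ m ∧ m < B + A + x₁) := by
              intro B A K hK hA hKA; omega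
            exact hgen (x₁*y) (j*x₁) (KD m (x₁*y)) rfl hlow hhigh
          rw [Finset.mem_union, Finset.mem_filter, Finset.mem_filter]
          rcases key with h | h
          · exact Or.inl ⟨hys, h⟩
          · exact Or.inr ⟨hys, h⟩
        have hcard1 : (s.filter (fun y => m + j*x₁ ≤ x₁*y ∧ x₁*y < m + j*x₁ + x₁)).card ≤ 1 := by
          apply Finset.card_le_one.2
          intro a ha b hb
          rw [Finset.mem_filter] at ha hb
          have hab : x₁*a < x₁*b + x₁ ∧ x₁*b < x₁*a + x₁ := by
            constructor <;> omega
          have h1' : a < b + 1 := by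
            have := hab.1
            rw [← Nat.mul_succ] at this
            exact Nat.lt_of_mul_lt_mul_left this
          have h2' : b < a + 1 := by
            have := hab.2
            rw [← Nat.mul_succ] at this
            exact Nat.lt_of_mul_lt_mul_left this
          omega
        have hcard2 : (s.filter (fun y => x₁*y + j*x₁ ≤ m ∧ m < x₁*y + j*x₁ + x₁)).card ≤ 1 := by
          apply Finset.card_le_one.2
          intro a ha b hb
          rw [Finset.mem_filter] at ha hb
          have hab : x₁*a < x₁*b + x₁ ∧ x₁*b < x₁*a + x₁ := by
            constructor <;> omega
          have h1' : a < b + 1 := by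
            have := hab.1
            rw [← Nat.mul_succ] at this
            exact Nat.lt_of_mul_lt_mul_left this
          have h2' : b < a + 1 := by
            have := hab.2
            rw [← Nat.mul_succ] at this
            exact Nat.lt_of_mul_lt_mul_left this
          omega
        have : (Finset.filter (fun x₄ => KD m (x₁*x₄) / x₁ = j) F).card ≤ 2 := by
          calc (Finset.filter (fun x₄ => KD m (x₁*x₄) / x₁ = j) F).card
              ≤ _ := Finset.card_le_card hsub
            _ ≤ _ := Finset.card_union_le _ _
            _ ≤ 2 := by omega
        exact_mod_cast this
    _ ≤ ∑ j ∈ Finset.Icc 1 (4*N), 2 * ((N:ℝ)/(2 * |t| * j)) := by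
        apply Finset.sum_le_sum_of_subset_of_nonneg
        · intro j hj
          obtain ⟨y, hyF, hyj⟩ := Finset.mem_image.1 hj
          rw [hF, Finset.mem_filter] at hyF
          obtain ⟨hys, hyK⟩ := hyF
          obtain ⟨hya, hyb⟩ := Finset.mem_Ioc.1 hys
          rw [Finset.mem_Icc]
          constructor
          · rw [← hyj]
            exact (Nat.one_le_div_iff hx1).2 hyK
          · rw [← hyj]
            have hK4 : KD m (x₁*y) ≤ 4*N^2 := hKb y hys
            have hmulK : (KD m (x₁*y) / x₁) * x₁ ≤ KD m (x₁*y) := Nat.div_mul_le_self _ _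
            have h4N : 4*N^2 ≤ (4*N)*x₁ := by
              have : (4*N)*N ≤ (4*N)*x₁ := Nat.mul_le_mul_left _ (by omega)
              have hexp : (4*N)*N = 4*N^2 := by ring
              omega
            have : (KD m (x₁*y) / x₁) * x₁ ≤ (4*N)*x₁ := by omega
            exact Nat.le_of_mul_le_mul_right this hx1
        · intro j _ _
          positivity
    _ = 2 * ∑ j ∈ Finset.Icc 1 (4*N), (N:ℝ)/(2 * |t| * j) := by rw [Finset.mul_sum]

lemma close_bound (N : ℕ) (hN : 2 ≤ N) (t : ℝ) (D : ℝ)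
    (hD : ∀ m : ℕ, m ≠ 0 → m ≤ N^5 → ((Nat.divisors m).card : ℝ) ≤ D) :
    ∑ x₁ ∈ Finset.Ioc N (2*N), ∑ x₂ ∈ Finset.Ioc N (2*N), ∑ x₃ ∈ Finset.Ioc N (2*N),
      ∑ x₄ ∈ Finset.Ioc N (2*N), g2 N t x₁ x₂ x₃ x₄
      ≤ (N:ℝ)^2 * ((2*D) * ∑ j ∈ Finset.Icc 1 (2*N), wt N t j) := by
  set s := Finset.Ioc N (2*N) with hs
  have hcard : s.card = N := by rw [hs, Nat.card_Ioc]; omega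
  calc ∑ x₁ ∈ s, ∑ x₂ ∈ s, ∑ x₃ ∈ s, ∑ x₄ ∈ s, g2 N t x₁ x₂ x₃ x₄
      = ∑ x₁ ∈ s, ∑ x₄ ∈ s, ∑ x₂ ∈ s, ∑ x₃ ∈ s, g2 N t x₁ x₂ x₃ x₄ :=
        sum4_swap s (g2 N t)
    _ ≤ ∑ x₁ ∈ s, ∑ x₄ ∈ s, ((2*D) * ∑ j ∈ Finset.Icc 1 (2*N), wt N t j) := by
        apply Finset.sum_le_sum
        intro x₁ h1
        apply Finset.sum_le_sum
        intro x₄ h4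
        exact close_inner N hN t D hD x₁ x₄ h1 h4
    _ = (N:ℝ)^2 * ((2*D) * ∑ j ∈ Finset.Icc 1 (2*N), wt N t j) := by
        rw [Finset.sum_const, Finset.sum_const, hcard, nsmul_eq_mul, nsmul_eq_mul]
        ring

lemma far_bound (N : ℕ) (hN : 2 ≤ N) (t : ℝ) (ht : t ≠ 0) :
    ∑ x₁ ∈ Finset.Ioc N (2*N), ∑ x₂ ∈ Finset.Ioc N (2*N), ∑ x₃ ∈ Finset.Ioc N (2*N),
      ∑ x₄ ∈ Finset.Ioc N (2*N), g3 N t x₁ x₂ x₃ x₄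
      ≤ (N:ℝ)^3 * (2 * ∑ j ∈ Finset.Icc 1 (4*N), (N:ℝ)/(2 * |t| * j)) := by
  set s := Finset.Ioc N (2*N) with hs
  have hcard : s.card = N := by rw [hs, Nat.card_Ioc]; omega
  calc ∑ x₁ ∈ s, ∑ x₂ ∈ s, ∑ x₃ ∈ s, ∑ x₄ ∈ s, g3 N t x₁ x₂ x₃ x₄
      ≤ ∑ x₁ ∈ s, ∑ x₂ ∈ s, ∑ x₃ ∈ s, (2 * ∑ j ∈ Finset.Icc 1 (4*N), (N:ℝ)/(2 * |t| * j)) := by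
        apply Finset.sum_le_sum; intro x₁ h1
        apply Finset.sum_le_sum; intro x₂ h2
        apply Finset.sum_le_sum; intro x₃ h3
        exact far_inner N hN t ht x₁ x₂ x₃ h1 h2 h3
    _ = (N:ℝ)^3 * (2 * ∑ j ∈ Finset.Icc 1 (4*N), (N:ℝ)/(2 * |t| * j)) := by
        rw [Finset.sum_const, Finset.sum_const, Finset.sum_const, hcard,
          nsmul_eq_mul, nsmul_eq_mul, nsmul_eq_mul]
        ring

set_option maxHeartbeats 2000000 in
theorem stmt_9 :
    ∀ ε : ℝ, 0 < ε → ∃ C : ℝ, 0 < C ∧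
      ∀ N : ℕ, 2 ≤ N → ∀ t : ℝ, t ≠ 0 →
        (∑ x₁ ∈ Finset.Ioc N (2 * N), ∑ x₂ ∈ Finset.Ioc N (2 * N),
         ∑ x₃ ∈ Finset.Ioc N (2 * N), ∑ x₄ ∈ Finset.Ioc N (2 * N),
          (if x₂^2 * x₃^2 = x₁^2 * x₄^2 then (1 : ℝ)
           else min 1 ((N : ℝ)^4 / (|t| * |(x₂ : ℝ)^2 * (x₃ : ℝ)^2 - (x₁ : ℝ)^2 * (x₄ : ℝ)^2|)))) ≤
          C * ((N : ℝ) ^ (2 + ε : ℝ) + (N : ℝ) ^ (4 + ε : ℝ) / |t|) := by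
  intro ε hε
  have hδ : (0:ℝ) < ε/10 := by linarith
  obtain ⟨Cd, hCd1, hCd⟩ := divisor_bound hδ
  set Cl : ℝ := 1 + 6/ε with hCldef
  have hCl1 : (1:ℝ) ≤ Cl := by
    have : (0:ℝ) < 6/ε := by positivity
    rw [hCldef]; linarith
  have hCd0 : (0:ℝ) < Cd := lt_of_lt_of_le one_pos hCd1
  have hCl0 : (0:ℝ) < Cl := lt_of_lt_of_le one_pos hCl1
  refine ⟨Cd + Cd*Cl + Cl + 1, by nlinarith, ?_⟩
  intro N hN t ht
  have hts : 0 < |t| := abs_pos.2 ht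
  have hN0 : (0:ℝ) < N := by exact_mod_cast (by omega : 0 < N)
  have hN1 : (1:ℝ) ≤ N := by exact_mod_cast (by omega : 1 ≤ N)
  set X : ℝ := (N:ℝ) with hXdef
  set F : ℝ := X^(ε/2) with hFdef
  have hF0 : 0 < F := Real.rpow_pos_of_pos hN0 _
  set s := Finset.Ioc N (2*N) with hs
  -- divisor count bound
  have hdiv : ∀ m : ℕ, m ≠ 0 → m ≤ N^5 → ((Nat.divisors m).card : ℝ) ≤ Cd * F := by
    intro m hm hm5
    calc ((Nat.divisors m).card : ℝ) ≤ Cd * (m:ℝ)^(ε/10) := hCd m hm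
      _ ≤ Cd * (X^(5:ℕ))^(ε/10) := by
          apply mul_le_mul_of_nonneg_left _ (by linarith)
          apply Real.rpow_le_rpow (by positivity) _ (by linarith)
          have hc : (m:ℝ) ≤ ((N^5 : ℕ):ℝ) := Nat.cast_le.2 hm5
          push_cast at hc
          exact hc
      _ = Cd * F := by
          rw [hFdef, ← Real.rpow_natCast X 5, ← Real.rpow_mul hN0.le]
          congr 1
          push_cast
          ring
  -- harmonic sums
  have hh2 : ∑ j ∈ Finset.Icc 1 (2*N), (1:ℝ)/j ≤ Cl * F := by
    have h := log_sum_le (show (0:ℝ) < ε/2 by linarith) N (2*N) hN (by omega)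
    have he : 1 + 3/(ε/2) = Cl := by rw [hCldef]; field_simp; ring
    rw [he] at h
    exact h
  have hh4 : ∑ j ∈ Finset.Icc 1 (4*N), (1:ℝ)/j ≤ Cl * F := by
    have h := log_sum_le (show (0:ℝ) < ε/2 by linarith) N (4*N) hN (le_refl _)
    have he : 1 + 3/(ε/2) = Cl := by rw [hCldef]; field_simp; ring
    rw [he] at h
    exact h
  -- weighted harmonic sums
  have hW : ∑ j ∈ Finset.Icc 1 (2*N), wt N t j ≤ (X^2/(2*|t|)) * (Cl * F) := by
    calc ∑ j ∈ Finset.Icc 1 (2*N), wt N t j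
        ≤ ∑ j ∈ Finset.Icc 1 (2*N), (X^2/(2*|t|)) * (1/(j:ℝ)) := by
          apply Finset.sum_le_sum
          intro j _
          calc wt N t j ≤ (N:ℝ)^2/(2 * |t| * j) := min_le_right _ _
            _ = (X^2/(2*|t|)) * (1/(j:ℝ)) := by rw [← div_div, div_eq_mul_one_div]
      _ = (X^2/(2*|t|)) * ∑ j ∈ Finset.Icc 1 (2*N), (1:ℝ)/j := by rw [Finset.mul_sum]
      _ ≤ (X^2/(2*|t|)) * (Cl * F) := by
          apply mul_le_mul_of_nonneg_left hh2 (by positivity)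
  have hSJ : ∑ j ∈ Finset.Icc 1 (4*N), (N:ℝ)/(2 * |t| * j) ≤ (X/(2*|t|)) * (Cl * F) := by
    calc ∑ j ∈ Finset.Icc 1 (4*N), (N:ℝ)/(2 * |t| * j)
        = (X/(2*|t|)) * ∑ j ∈ Finset.Icc 1 (4*N), (1:ℝ)/j := by
          rw [Finset.mul_sum]
          apply Finset.sum_congr rfl
          intro j _
          rw [← div_div, div_eq_mul_one_div]
      _ ≤ (X/(2*|t|)) * (Cl * F) := by
          apply mul_le_mul_of_nonneg_left hh4 (by positivity)
  -- rpow algebra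
  have hXpow : ∀ (k : ℕ) (r : ℝ), X^(k:ℕ) * X^(r:ℝ) = X^(((k:ℕ):ℝ)+r) := by
    intro k r
    rw [Real.rpow_add hN0, Real.rpow_natCast]
  have e2 : X^(2:ℕ) * F = X^((2:ℝ)+ε/2) := by
    have h := hXpow 2 (ε/2); push_cast at h; exact h
  have e44 : X^(4:ℕ) * F = X^((4:ℝ)+ε/2) := by
    have h := hXpow 4 (ε/2); push_cast at h; exact h
  have e4 : X^(2:ℕ) * X^(2:ℕ) * (F*F) = X^((4:ℝ)+ε) := by
    calc X^(2:ℕ) * X^(2:ℕ) * (F*F) = (X^(2:ℕ)*F) * (X^(2:ℕ)*F) := by ring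
      _ = X^((2:ℝ)+ε/2) * X^((2:ℝ)+ε/2) := by rw [e2]
      _ = X^((4:ℝ)+ε) := by
          rw [← Real.rpow_add hN0]
          congr 1
          ring
  have hmono : ∀ r u : ℝ, r ≤ u → X^(r:ℝ) ≤ X^(u:ℝ) :=
    fun r u h => Real.rpow_le_rpow_of_exponent_le hN1 h
  set A : ℝ := X^((2:ℝ)+ε) with hAdef
  set B : ℝ := X^((4:ℝ)+ε)/|t| with hBdef
  have hA0 : 0 ≤ A := le_of_lt (Real.rpow_pos_of_pos hN0 _)
  have hB0 : 0 ≤ B := by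
    rw [hBdef]
    positivity
  -- the three key bounds
  have key1 : X^2 * (Cd * F) ≤ Cd * A := by
    calc X^2 * (Cd * F) = Cd * (X^(2:ℕ) * F) := by ring
      _ = Cd * X^((2:ℝ)+ε/2) := by rw [e2]
      _ ≤ Cd * A := by
          apply mul_le_mul_of_nonneg_left _ (by linarith)
          rw [hAdef]
          exact hmono _ _ (by linarith)
  have key2 : X^2 * ((2*(Cd * F)) * ((X^2/(2*|t|)) * (Cl * F))) ≤ (Cd*Cl) * B := by
    have heq : X^2 * ((2*(Cd * F)) * ((X^2/(2*|t|)) * (Cl * F)))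
        = (Cd*Cl) * ((X^(2:ℕ) * X^(2:ℕ) * (F*F))/|t|) := by
      field_simp
    rw [heq, e4, hBdef]
  have key3 : X^3 * (2 * ((X/(2*|t|)) * (Cl * F))) ≤ Cl * B := by
    have heq : X^3 * (2 * ((X/(2*|t|)) * (Cl * F))) = Cl * ((X^(4:ℕ) * F)/|t|) := by
      field_simp
    rw [heq, e44, hBdef]
    apply mul_le_mul_of_nonneg_left _ (by linarith)
    apply (div_le_div_iff_of_pos_right hts).2
    exact hmono _ _ (by linarith)
  -- assemble
  have b1 : ∑ x₁ ∈ s, ∑ x₂ ∈ s, ∑ x₃ ∈ s, ∑ x₄ ∈ s, g1 x₁ x₂ x₃ x₄ ≤ Cd * A :=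
    le_trans (diag_bound N hN (Cd*F) hdiv) key1
  have b2 : ∑ x₁ ∈ s, ∑ x₂ ∈ s, ∑ x₃ ∈ s, ∑ x₄ ∈ s, g2 N t x₁ x₂ x₃ x₄ ≤ (Cd*Cl) * B := by
    refine le_trans (close_bound N hN t (Cd*F) hdiv) (le_trans ?_ key2)
    apply mul_le_mul_of_nonneg_left _ (by positivity)
    apply mul_le_mul_of_nonneg_left hW (by nlinarith)
  have b3 : ∑ x₁ ∈ s, ∑ x₂ ∈ s, ∑ x₃ ∈ s, ∑ x₄ ∈ s, g3 N t x₁ x₂ x₃ x₄ ≤ Cl * B := by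
    refine le_trans (far_bound N hN t ht) (le_trans ?_ key3)
    apply mul_le_mul_of_nonneg_left _ (by positivity)
    exact mul_le_mul_of_nonneg_left hSJ (by norm_num)
  refine le_trans (Finset.sum_le_sum fun x₁ h1 => Finset.sum_le_sum fun x₂ h2 =>
    Finset.sum_le_sum fun x₃ h3 => Finset.sum_le_sum fun x₄ h4 =>
      pointwise N hN t ht h1 h2 h3 h4) ?_
  have hsplit : ∑ x₁ ∈ s, ∑ x₂ ∈ s, ∑ x₃ ∈ s, ∑ x₄ ∈ s,
      (g1 x₁ x₂ x₃ x₄ + g2 N t x₁ x₂ x₃ x₄ + g3 N t x₁ x₂ x₃ x₄)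
      = (∑ x₁ ∈ s, ∑ x₂ ∈ s, ∑ x₃ ∈ s, ∑ x₄ ∈ s, g1 x₁ x₂ x₃ x₄)
        + (∑ x₁ ∈ s, ∑ x₂ ∈ s, ∑ x₃ ∈ s, ∑ x₄ ∈ s, g2 N t x₁ x₂ x₃ x₄)
        + (∑ x₁ ∈ s, ∑ x₂ ∈ s, ∑ x₃ ∈ s, ∑ x₄ ∈ s, g3 N t x₁ x₂ x₃ x₄) := by
    simp only [Finset.sum_add_distrib]
  rw [hsplit]
  have hfin := add_le_add (add_le_add b1 b2) b3
  refine le_trans hfin ?_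
  nlinarith [mul_nonneg hCd0.le hB0, mul_nonneg (mul_nonneg hCd0.le hCl0.le) hA0,
    mul_nonneg hCl0.le hA0, hA0, hB0]
end
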